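/- arXiv:2601.18530 — 5 statements merged into one kernel-verified Lean document; each statement's English description precedes it below -/
import Mathlib

section
/- Let 𝓕 be a symmetric finite family of homeomorphisms of the circle S¹ admitting an exceptional minimal set K (a Cantor set with f(K) = K for all f ∈ 𝓕 and K equal to the closure of the 𝓕-orbit of every point of K) such that the 𝓕-orbit of every point of S¹ \ K is dense in S¹. Let h be a homeomorphism of S¹ such that h(K) strictly contains K and h has an attracting fixed point p ∈ S¹ \ K. Then the IFS 𝓕 ∪ {h} is minimal (the (𝓕 ∪ {h})-orbit of every point of S¹ is dense in S¹), while the IFS 𝓕₋ ∪ {h⁻¹} is not minimal. -/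
open Metric Set Filter

noncomputable section

/-- The circle `S¹ = ℝ/ℤ` with its standard metric. -/
abbrev Circle1 := AddCircle (1 : ℝ)

/-- The Hutchinson operator of a family `G` of homeomorphisms:
`A ↦ ⋃_{g ∈ G} g(A)`. -/
def hutch (G : Set (Circle1 ≃ₜ Circle1)) (A : Set Circle1) : Set Circle1 :=
  ⋃ g ∈ G, g '' A

/-- `d_F(x, y) = sup_{n ≥ 0} d_H(F^n({x}), F^n({y}))`, where `F` is the
Hutchinson operator of `G` and `d_H` is the Hausdorff distance. -/
noncomputable def dHutch (G : Set (Circle1 ≃ₜ Circle1)) (x y : Circle1) : ℝ :=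
  ⨆ n : ℕ, hausdorffDist ((hutch G)^[n] {x}) ((hutch G)^[n] {y})

/-- `x` is an equicontinuous point of the Hutchinson operator of `G`:
the identity `(X, d) → (X, d_F)` is continuous at `x`. -/
def IsEqcPoint (G : Set (Circle1 ≃ₜ Circle1)) (x : Circle1) : Prop :=
  ∀ ε > 0, ∃ δ > 0, ∀ y : Circle1, dist x y < δ → dHutch G x y < ε

/-- The Hutchinson operator of `G` is equicontinuous:
every point is an equicontinuous point. -/
def EquicontinuousHutch (G : Set (Circle1 ≃ₜ Circle1)) : Prop :=
  ∀ x : Circle1, IsEqcPoint G x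

/-- The Hutchinson operator of `G` is sensitive: there is `ε > 0` such that every
non-empty open set has `d_F`-diameter at least `ε`. -/
def SensitiveHutch (G : Set (Circle1 ≃ₜ Circle1)) : Prop :=
  ∃ ε > 0, ∀ U : Set Circle1, IsOpen U → U.Nonempty →
    ε ≤ sSup {r : ℝ | ∃ x ∈ U, ∃ y ∈ U, r = dHutch G x y}

/-- The `G`-orbit of `x`: all points `g_{ωₙ} ∘ ⋯ ∘ g_{ω₁} (x)` with each `g_{ωⱼ} ∈ G`
(including `x` itself, for `n = 0`). -/
def fOrbit (G : Set (Circle1 ≃ₜ Circle1)) (x : Circle1) : Set Circle1 :=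
  {y | ∃ l : List (Circle1 ≃ₜ Circle1), (∀ g ∈ l, g ∈ G) ∧ y = l.foldl (fun z g => g z) x}

/-- The family of inverses of the members of `G`. -/
def invFam (G : Set (Circle1 ≃ₜ Circle1)) : Set (Circle1 ≃ₜ Circle1) :=
  Homeomorph.symm '' G

/-- `S¹` is an attractor for the family `G`: `d_H(F^n(C), S¹) → 0` for every
non-empty compact set `C`. -/
def IsAttractor (G : Set (Circle1 ≃ₜ Circle1)) : Prop :=
  ∀ C : Set Circle1, IsCompact C → C.Nonempty →
    Tendsto (fun n => hausdorffDist ((hutch G)^[n] C) Set.univ) atTop (nhds 0)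

/-- A Cantor set in `S¹`: non-empty, compact, perfect and totally disconnected. -/
def IsCantorIn (K : Set Circle1) : Prop :=
  K.Nonempty ∧ IsCompact K ∧ Perfect K ∧ IsTotallyDisconnected K

lemma fOrbit_self (G : Set (Circle1 ≃ₜ Circle1)) (x : Circle1) : x ∈ fOrbit G x :=
  ⟨[], by simp, by simp⟩

lemma fOrbit_mono {G G' : Set (Circle1 ≃ₜ Circle1)} (hGG' : G ⊆ G') (x : Circle1) :
    fOrbit G x ⊆ fOrbit G' x := by
  rintro y ⟨l, hl, rfl⟩
  exact ⟨l, fun g hg => hGG' (hl g hg), rfl⟩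

lemma fOrbit_trans {G : Set (Circle1 ≃ₜ Circle1)} {x y : Circle1}
    (hy : y ∈ fOrbit G x) : fOrbit G y ⊆ fOrbit G x := by
  obtain ⟨l1, hl1, rfl⟩ := hy
  rintro z ⟨l2, hl2, rfl⟩
  refine ⟨l1 ++ l2, ?_, ?_⟩
  · intro g hg
    rcases List.mem_append.mp hg with hg | hg
    · exact hl1 g hg
    · exact hl2 g hg
  · rw [List.foldl_append]

lemma fOrbit_apply {G : Set (Circle1 ≃ₜ Circle1)} {x y : Circle1} {g : Circle1 ≃ₜ Circle1}
    (hy : y ∈ fOrbit G x) (hg : g ∈ G) : g y ∈ fOrbit G x := by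
  obtain ⟨l, hl, rfl⟩ := hy
  refine ⟨l ++ [g], ?_, ?_⟩
  · intro g' hg'
    rcases List.mem_append.mp hg' with hg' | hg'
    · exact hl g' hg'
    · simp at hg'; subst hg'; exact hg
  · simp [List.foldl_append]

lemma foldl_mem_of_inv {G : Set (Circle1 ≃ₜ Circle1)} {K : Set Circle1}
    (hG : ∀ g ∈ G, ∀ z ∈ K, g z ∈ K) :
    ∀ l : List (Circle1 ≃ₜ Circle1), (∀ g ∈ l, g ∈ G) → ∀ x ∈ K,
      l.foldl (fun z g => g z) x ∈ K := by
  intro l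
  induction l with
  | nil => intro _ x hx; simpa using hx
  | cons a l ih =>
    intro hl x hx
    simp only [List.foldl_cons]
    exact ih (fun g hg => hl g (List.mem_cons_of_mem a hg))
      (a x) (hG a (hl a (List.mem_cons_self (a := a) (l := l))) x hx)

/-- Adjoining to such a symmetric family a homeomorphism `h` with `h(K) ⊋ K` and an
attracting fixed point `p ∉ K` yields a minimal IFS `𝓕 ∪ {h}`, whereas the
inverse IFS `𝓕₋ ∪ {h⁻¹}` is not minimal. -/
theorem stmt3 (G : Set (Circle1 ≃ₜ Circle1)) (hfin : G.Finite)
    (hsymm : ∀ f ∈ G, f.symm ∈ G)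
    (K : Set Circle1) (hK : IsCantorIn K)
    (hinv : ∀ f ∈ G, f '' K = K)
    (hmin : ∀ x ∈ K, closure (fOrbit G x) = K)
    (hdense : ∀ x ∉ K, Dense (fOrbit G x))
    (h : Circle1 ≃ₜ Circle1) (hKh : K ⊂ h '' K)
    (p : Circle1) (hp : p ∉ K) (hfix : h p = p)
    (hattr : ∃ U ∈ nhds p, ∀ x ∈ U, Tendsto (fun n => (⇑h)^[n] x) atTop (nhds p)) :
    (∀ x : Circle1, Dense (fOrbit (G ∪ {h}) x)) ∧
      ¬ (∀ x : Circle1, Dense (fOrbit (invFam G ∪ {h.symm}) x)) := by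
  have hKclosed : IsClosed K := hK.2.1.isClosed
  constructor
  · intro x
    by_cases hx : x ∈ K
    · -- find a point q = h k ∉ K with k ∈ K
      obtain ⟨q, hqK, hqnK⟩ := exists_of_ssubset hKh
      obtain ⟨k, hk, rfl⟩ := hqK
      -- V = h ⁻¹' Kᶜ is an open neighborhood of k
      have hV : IsOpen (h ⁻¹' Kᶜ) := hKclosed.isOpen_compl.preimage h.continuous
      have hkV : k ∈ h ⁻¹' Kᶜ := hqnK
      have hkcl : k ∈ closure (fOrbit G x) := (hmin x hx).symm ▸ hk
      obtain ⟨y, hyV, hyO⟩ := _root_.mem_closure_iff.mp hkcl _ hV hkV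
      have hhy : h y ∉ K := hyV
      have hyO' : y ∈ fOrbit (G ∪ {h}) x := fOrbit_mono Set.subset_union_left x hyO
      have hhyO : h y ∈ fOrbit (G ∪ {h}) x :=
        fOrbit_apply hyO' (Set.mem_union_right _ rfl)
      exact Dense.mono
        ((fOrbit_mono Set.subset_union_left (h y)).trans (fOrbit_trans hhyO))
        (hdense _ hhy)
    · exact Dense.mono (fOrbit_mono Set.subset_union_left x) (hdense x hx)
  · intro hall
    obtain ⟨x0, hx0⟩ := hK.1
    have hstab : ∀ g ∈ invFam G ∪ {h.symm}, ∀ z ∈ K, g z ∈ K := by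
      rintro g (⟨f, hf, rfl⟩ | hg) z hz
      · have : z ∈ f '' K := (hinv f hf).symm ▸ hz
        obtain ⟨w, hw, rfl⟩ := this
        simpa using hw
      · simp only [Set.mem_singleton_iff] at hg
        subst hg
        have : z ∈ h '' K := hKh.1 hz
        obtain ⟨w, hw, rfl⟩ := this
        simpa using hw
    have horb : fOrbit (invFam G ∪ {h.symm}) x0 ⊆ K := by
      rintro y ⟨l, hl, rfl⟩
      exact foldl_mem_of_inv hstab l hl x0 hx0
    have hpK : p ∈ K := by
      have := (hall x0).closure_eq
      have hp' : p ∈ closure (fOrbit (invFam G ∪ {h.symm}) x0) := this ▸ Set.mem_univ p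
      exact (hKclosed.closure_subset_iff.mpr horb) hp'
    exact hp hpK
end
end

section
/- Let 𝓕 be a symmetric finite family of homeomorphisms of the circle S¹ admitting an exceptional minimal set K (a Cantor set with f(K) = K for all f ∈ 𝓕 and K equal to the closure of the 𝓕-orbit of every point of K) such that the 𝓕-orbit of every point of S¹ \ K is dense in S¹, and let h be a homeomorphism of S¹ such that h(K) strictly contains K and h has an attracting fixed point p ∈ S¹ \ K. Then the Hutchinson operator of the IFS 𝓕 ∪ {h} is equicontinuous, and S¹ is an attractor for 𝓕 ∪ {h}: for every non-empty compact set C ⊆ S¹, d_H(G^n(C), S¹) → 0 as n → ∞, where G is the Hutchinson operator of 𝓕 ∪ {h}. -/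
open Metric Set Filter

noncomputable section

namespace StmtAux

abbrev H := Circle1 ≃ₜ Circle1

/-- Evaluate a word (list of homeomorphisms, applied left-to-right). -/
def evalL (l : List H) (x : Circle1) : Circle1 := l.foldl (fun z g => g z) x

@[simp] lemma evalL_nil (x : Circle1) : evalL [] x = x := rfl

lemma evalL_cons (g : H) (l : List H) (x : Circle1) :
    evalL (g :: l) x = evalL l (g x) := rfl

lemma evalL_append (l₁ l₂ : List H) (x : Circle1) :
    evalL (l₁ ++ l₂) x = evalL l₂ (evalL l₁ x) := List.foldl_append

lemma continuous_evalL (l : List H) : Continuous (evalL l) := by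
  induction l with
  | nil => exact continuous_id
  | cons g l ih =>
    have : evalL (g :: l) = fun x => evalL l (g x) := rfl
    rw [this]
    exact ih.comp g.continuous

lemma mem_hutch_iff {F : Set H} {A : Set Circle1} {z : Circle1} :
    z ∈ hutch F A ↔ ∃ g ∈ F, ∃ a ∈ A, g a = z := by
  simp [hutch]

lemma mem_iterate_hutch (F : Set H) :
    ∀ (n : ℕ) (x z : Circle1),
    z ∈ (hutch F)^[n] {x} ↔
      ∃ l : List H, (∀ g ∈ l, g ∈ F) ∧ l.length = n ∧ z = evalL l x := by
  intro n
  induction n with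
  | zero =>
    intro x z
    simp only [Function.iterate_zero, id_eq, mem_singleton_iff]
    constructor
    · rintro rfl; exact ⟨[], by simp, rfl, rfl⟩
    · rintro ⟨l, _, hlen, rfl⟩
      rw [List.length_eq_zero_iff] at hlen
      subst hlen; rfl
  | succ n ih =>
    intro x z
    rw [Function.iterate_succ_apply']
    constructor
    · intro hz
      rcases mem_hutch_iff.1 hz with ⟨g, hg, a, ha, rfl⟩
      rcases (ih x a).1 ha with ⟨l, hl, hlen, rfl⟩
      refine ⟨l ++ [g], ?_, by simp [hlen], by simp [evalL_append, evalL_cons]⟩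
      intro g' hg'
      rcases List.mem_append.1 hg' with h' | h'
      · exact hl _ h'
      · rw [List.mem_singleton] at h'; subst h'; exact hg
    · rintro ⟨l, hl, hlen, rfl⟩
      rcases List.eq_nil_or_concat l with rfl | ⟨L, b, rfl⟩
      · simp at hlen
      · rw [List.concat_eq_append] at *
        have hLlen : L.length = n := by simpa using hlen
        refine mem_hutch_iff.2 ⟨b, hl b (by simp), evalL L x, ?_, by
          simp [evalL_append, evalL_cons]⟩
        exact (ih x _).2 ⟨L, fun g hg => hl g (by simp [hg]), hLlen, rfl⟩

lemma iterate_hutch_mono (F : Set H) (n : ℕ) {A B : Set Circle1} (hAB : A ⊆ B) :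
    (hutch F)^[n] A ⊆ (hutch F)^[n] B := by
  induction n generalizing A B with
  | zero => simpa using hAB
  | succ n ih =>
    rw [Function.iterate_succ_apply', Function.iterate_succ_apply']
    intro z hz
    rcases mem_hutch_iff.1 hz with ⟨g, hg, a, ha, rfl⟩
    exact mem_hutch_iff.2 ⟨g, hg, a, ih hAB ha, rfl⟩

/-- Padding words that act as the identity. -/
def pads (g : H) : ℕ → List H
  | 0 => []
  | k + 1 => g :: g.symm :: pads g k

@[simp] lemma evalL_pads (g : H) (k : ℕ) (x : Circle1) : evalL (pads g k) x = x := by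
  induction k generalizing x with
  | zero => rfl
  | succ k ih => simp [pads, evalL_cons, Homeomorph.symm_apply_apply, ih]

@[simp] lemma length_pads (g : H) (k : ℕ) : (pads g k).length = 2 * k := by
  induction k with
  | zero => rfl
  | succ k ih => simp [pads, ih]; ring

lemma mem_pads {g g' : H} {k : ℕ} (hg' : g' ∈ pads g k) : g' = g ∨ g' = g.symm := by
  induction k with
  | zero => simp [pads] at hg'
  | succ k ih =>
    simp only [pads, List.mem_cons] at hg'
    rcases hg' with rfl | rfl | h'
    · exact Or.inl rfl
    · exact Or.inr rfl
    · exact ih h'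

section Main

/-- From any point we can steer into any nonempty open set by a word over `G ∪ {h}`. -/
lemma reach_lemma (G : Set H) (K : Set Circle1)
    (hmin : ∀ x ∈ K, closure (fOrbit G x) = K)
    (hdense : ∀ x ∉ K, Dense (fOrbit G x))
    (h : H) (hKh : K ⊂ h '' K) (x : Circle1) (V : Set Circle1) (hV : IsOpen V) (hVne : V.Nonempty) :
    ∃ l : List H, (∀ g ∈ l, g ∈ G ∪ {h}) ∧ evalL l x ∈ V := by
  by_cases hxK : x ∈ K
  · obtain ⟨x₀, hx₀h, hx₀K⟩ := exists_of_ssubset hKh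
    obtain ⟨k₀, hk₀K, rfl⟩ := hx₀h
    obtain ⟨q, hqO, hqV⟩ := (hdense _ hx₀K).exists_mem_open hV hVne
    obtain ⟨u, hu, rfl⟩ := hqO
    have hcont : Continuous (fun z => evalL u (h z)) := (continuous_evalL u).comp h.continuous
    have hWopen : IsOpen ((fun z => evalL u (h z)) ⁻¹' V) := hV.preimage hcont
    have hk₀W : k₀ ∈ (fun z => evalL u (h z)) ⁻¹' V := hqV
    have hk₀cl : k₀ ∈ closure (fOrbit G x) := by rw [hmin x hxK]; exact hk₀K
    obtain ⟨w', hw'W, hw'orb⟩ := (_root_.mem_closure_iff.1 hk₀cl) _ hWopen hk₀W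
    obtain ⟨w, hw, rfl⟩ := hw'orb
    refine ⟨w ++ h :: u, ?_, ?_⟩
    · intro g hg
      rcases List.mem_append.1 hg with h' | h'
      · exact Or.inl (hw _ h')
      · rcases List.mem_cons.1 h' with rfl | h''
        · exact Or.inr rfl
        · exact Or.inl (hu _ h'')
    · rw [evalL_append, evalL_cons]
      exact hw'W
  · obtain ⟨q, hqO, hqV⟩ := (hdense _ hxK).exists_mem_open hV hVne
    obtain ⟨u, hu, rfl⟩ := hqO
    exact ⟨u, fun g hg => Or.inl (hu g hg), hqV⟩

/-- Version with a ball of uniformity around `x`. -/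
lemma reach_ball (G : Set H) (K : Set Circle1)
    (hmin : ∀ x ∈ K, closure (fOrbit G x) = K)
    (hdense : ∀ x ∉ K, Dense (fOrbit G x))
    (h : H) (hKh : K ⊂ h '' K) (x : Circle1) (V : Set Circle1) (hV : IsOpen V) (hVne : V.Nonempty) :
    ∃ l : List H, (∀ g ∈ l, g ∈ G ∪ {h}) ∧ ∃ δ > 0, ∀ y, dist x y < δ → evalL l y ∈ V := by
  obtain ⟨l, hl, hx⟩ := reach_lemma G K hmin hdense h hKh x V hV hVne
  have hopen : IsOpen (evalL l ⁻¹' V) := hV.preimage (continuous_evalL l)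
  rcases Metric.isOpen_iff.1 hopen x hx with ⟨δ, hδ, hb⟩
  exact ⟨l, hl, δ, hδ, fun y hy => hb (by rw [mem_ball, dist_comm]; exact hy)⟩

/-- Main claim: uniformly near `x`, all sufficiently long iterates of singletons
are `ε`-dense. -/
lemma claimA (G : Set H) (K : Set Circle1)
    (hmin : ∀ x ∈ K, closure (fOrbit G x) = K)
    (hdense : ∀ x ∉ K, Dense (fOrbit G x))
    (h : H) (hKh : K ⊂ h '' K)
    (p : Circle1) (hp : p ∉ K) (hfix : h p = p)
    (hsymm : ∀ f ∈ G, f.symm ∈ G) (hGne : G.Nonempty) (x : Circle1) (ε : ℝ) (hε : 0 < ε) :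
    ∃ δ > 0, ∃ N : ℕ, ∀ y, dist x y < δ → ∀ n ≥ N, ∀ t : Circle1,
      ∃ z ∈ (hutch (G ∪ {h}))^[n] {y}, dist t z < ε := by
  haveI : Fact ((0:ℝ) < 1) := ⟨zero_lt_one⟩
  classical
  set W := {l : List H // ∀ g ∈ l, g ∈ G} with hW
  have hcov : (univ : Set Circle1) ⊆ ⋃ l : W, ball (evalL l.1 p) (ε / 2) := by
    intro t _
    have ht : t ∈ closure (fOrbit G p) := hdense p hp t
    rcases Metric.mem_closure_iff.1 ht (ε / 2) (half_pos hε) with ⟨q, hq, hdq⟩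
    obtain ⟨l, hl, rfl⟩ := hq
    exact mem_iUnion.2 ⟨⟨l, hl⟩, by rw [mem_ball]; exact hdq⟩
  obtain ⟨s, hs⟩ := isCompact_univ.elim_finite_subcover
    (fun l : W => ball (evalL l.1 p) (ε / 2)) (fun l => isOpen_ball) hcov
  have hsne : s.Nonempty := by
    rcases Finset.eq_empty_or_nonempty s with rfl | hne
    · exfalso
      have := hs (mem_univ p)
      simp at this
    · exact hne
  have hmod : ∀ l : W, ∃ η > 0, ∀ z : Circle1,
      dist p z < η → dist (evalL l.1 p) (evalL l.1 z) < ε / 2 := by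
    intro l
    rcases Metric.continuousAt_iff.1 ((continuous_evalL l.1).continuousAt (x := p))
      (ε / 2) (half_pos hε) with ⟨η, hη, hmap⟩
    refine ⟨η, hη, fun z hz => ?_⟩
    have := hmap (show dist z p < η by rwa [dist_comm])
    rwa [dist_comm] at this
  choose m hm1 hm2 using hmod
  set η := s.inf' hsne m with hηdef
  have hη : 0 < η := by
    rw [hηdef, Finset.lt_inf'_iff]
    exact fun l _ => hm1 l
  obtain ⟨η₀, hη₀, hh⟩ := Metric.continuousAt_iff.1 (h.continuous.continuousAt (x := p)) η hη
  rw [hfix] at hh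
  set η₁ := min η₀ η with hη₁def
  have hη₁ : 0 < η₁ := lt_min hη₀ hη
  obtain ⟨la, hla, δ, hδ, hreach⟩ := reach_ball G K hmin hdense h hKh x
    (ball p η₁) isOpen_ball ⟨p, mem_ball_self hη₁⟩
  obtain ⟨g₀, hg₀⟩ := hGne
  set M := s.sup (fun l => l.1.length) with hM
  refine ⟨δ, hδ, la.length + M + 1, fun y hy n hn t => ?_⟩
  obtain ⟨l, hls, htl⟩ : ∃ l ∈ s, t ∈ ball (evalL l.1 p) (ε / 2) := by
    have := hs (mem_univ t)
    simpa using this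
  have hlM : l.1.length ≤ M := Finset.le_sup (f := fun l : W => l.1.length) hls
  set r := n - la.length - l.1.length with hr
  have hreq : la.length + r + l.1.length = n ∧ 1 ≤ r := by omega
  have hz₀ : dist (evalL la y) p < η₁ := by
    have := hreach y hy
    rwa [mem_ball] at this
  have hmem_l : ∀ g ∈ l.1, g ∈ G ∪ {h} := fun g hg => Or.inl (l.2 g hg)
  have hmem_pads : ∀ k, ∀ g ∈ pads g₀ k, g ∈ G ∪ {h} := by
    intro k g hg
    rcases mem_pads hg with rfl | rfl
    · exact Or.inl hg₀
    · exact Or.inl (hsymm _ hg₀)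
  have htls : dist t (evalL l.1 p) < ε / 2 := by rwa [mem_ball] at htl
  have key : ∀ z₁ : Circle1, dist p z₁ < η → dist t (evalL l.1 z₁) < ε := by
    intro z₁ hz₁
    have h2 : dist (evalL l.1 p) (evalL l.1 z₁) < ε / 2 := by
      apply hm2 l z₁
      exact lt_of_lt_of_le hz₁ (Finset.inf'_le m hls)
    calc dist t (evalL l.1 z₁) ≤ dist t (evalL l.1 p) + dist (evalL l.1 p) (evalL l.1 z₁) :=
      dist_triangle _ _ _
    _ < ε / 2 + ε / 2 := add_lt_add htls h2
    _ = ε := add_halves ε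
  rcases Nat.even_or_odd r with ⟨k, hk⟩ | ⟨k, hk⟩
  · -- r = k + k : pad with (g₀, g₀⁻¹) pairs
    refine ⟨evalL (la ++ (pads g₀ k ++ l.1)) y, ?_, ?_⟩
    · apply (mem_iterate_hutch (G ∪ {h}) n y _).2
      refine ⟨la ++ (pads g₀ k ++ l.1), ?_, ?_, rfl⟩
      · intro g hg
        rcases List.mem_append.1 hg with h' | h'
        · exact hla _ h'
        · rcases List.mem_append.1 h' with h'' | h''
          · exact hmem_pads k _ h''
          · exact hmem_l _ h''
      · simp only [List.length_append, length_pads]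
        omega
    · rw [evalL_append, evalL_append, evalL_pads]
      apply key
      rw [dist_comm]
      exact lt_of_lt_of_le hz₀ (le_trans (min_le_right _ _) le_rfl)
  · -- r = 2k + 1 : one extra h near its fixed point, then pads
    refine ⟨evalL (la ++ (h :: (pads g₀ k ++ l.1))) y, ?_, ?_⟩
    · apply (mem_iterate_hutch (G ∪ {h}) n y _).2
      refine ⟨la ++ (h :: (pads g₀ k ++ l.1)), ?_, ?_, rfl⟩
      · intro g hg
        rcases List.mem_append.1 hg with h' | h'
        · exact hla _ h'
        · rcases List.mem_cons.1 h' with rfl | h''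
          · exact Or.inr rfl
          · rcases List.mem_append.1 h'' with h3 | h3
            · exact hmem_pads k _ h3
            · exact hmem_l _ h3
      · simp only [List.length_append, List.length_cons, length_pads]
        omega
    · rw [evalL_append, evalL_cons, evalL_append, evalL_pads]
      apply key
      rw [dist_comm]
      apply hh
      exact lt_of_lt_of_le hz₀ (min_le_left _ _)

end Main

/-- Equicontinuity of finite families of words of bounded length. -/
lemma finite_words (F : Set H) (hFfin : F.Finite) (hFne : F.Nonempty) :
    ∀ (n : ℕ) (x : Circle1) (ε : ℝ), 0 < ε → ∃ δ > 0, ∀ y, dist x y < δ →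
      ∀ l : List H, (∀ g ∈ l, g ∈ F) → l.length ≤ n →
        dist (evalL l x) (evalL l y) ≤ ε := by
  classical
  intro n
  induction n with
  | zero =>
    intro x ε hε
    refine ⟨ε, hε, fun y hy l _ hlen => ?_⟩
    have : l = [] := List.length_eq_zero_iff.1 (Nat.le_zero.1 hlen)
    subst this
    simpa [evalL] using le_of_lt hy
  | succ n ih =>
    intro x ε hε
    have h1 : ∀ g : H, ∃ δ > 0, ∀ y, dist (g x) y < δ →
        ∀ l : List H, (∀ g' ∈ l, g' ∈ F) → l.length ≤ n →
          dist (evalL l (g x)) (evalL l y) ≤ ε := fun g => ih (g x) ε hε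
    choose D hD1 hD2 using h1
    have h2 : ∀ g : H, ∃ δ' > 0, ∀ y, dist x y < δ' → dist (g x) (g y) < D g := by
      intro g
      rcases Metric.continuousAt_iff.1 (g.continuous.continuousAt (x := x)) (D g) (hD1 g)
        with ⟨δ', hδ', hmap⟩
      refine ⟨δ', hδ', fun y hy => ?_⟩
      have := hmap (show dist y x < δ' by rwa [dist_comm])
      rwa [dist_comm] at this
    choose D' hD'1 hD'2 using h2
    set T := hFfin.toFinset with hT
    have hTne : T.Nonempty := by rwa [hT, Set.Finite.toFinset_nonempty]
    refine ⟨min ε (T.inf' hTne D'), lt_min hε (by rw [Finset.lt_inf'_iff]; exact fun g _ => hD'1 g), ?_⟩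
    intro y hy l hl hlen
    match l with
    | [] => simpa [evalL] using le_of_lt (lt_of_lt_of_le hy (min_le_left _ _))
    | g :: l' =>
      have hgF : g ∈ F := hl g List.mem_cons_self
      have hgT : g ∈ T := hFfin.mem_toFinset.2 hgF
      have hxy : dist x y < D' g :=
        lt_of_lt_of_le hy (le_trans (min_le_right _ _) (Finset.inf'_le D' hgT))
      have hgxy : dist (g x) (g y) < D g := hD'2 g y hxy
      rw [evalL_cons, evalL_cons]
      exact hD2 g (g y) hgxy l' (fun g' hg' => hl g' (List.mem_cons.2 (Or.inr hg')))
        (by simpa using hlen)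

end StmtAux

open StmtAux

/-- In the same situation, the Hutchinson operator of `𝓕 ∪ {h}` is equicontinuous
and `S¹` is an attractor for `𝓕 ∪ {h}`. -/
theorem stmt4 (G : Set (Circle1 ≃ₜ Circle1)) (hfin : G.Finite)
    (hsymm : ∀ f ∈ G, f.symm ∈ G)
    (K : Set Circle1) (hK : IsCantorIn K)
    (hinv : ∀ f ∈ G, f '' K = K)
    (hmin : ∀ x ∈ K, closure (fOrbit G x) = K)
    (hdense : ∀ x ∉ K, Dense (fOrbit G x))
    (h : Circle1 ≃ₜ Circle1) (hKh : K ⊂ h '' K)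
    (p : Circle1) (hp : p ∉ K) (hfix : h p = p)
    (hattr : ∃ U ∈ nhds p, ∀ x ∈ U, Tendsto (fun n => (⇑h)^[n] x) atTop (nhds p)) :
    EquicontinuousHutch (G ∪ {h}) ∧ IsAttractor (G ∪ {h}) := by
  classical
  haveI : Fact ((0:ℝ) < 1) := ⟨zero_lt_one⟩
  -- G is nonempty
  have hGne : G.Nonempty := by
    rcases Set.eq_empty_or_nonempty G with rfl | hne
    · exfalso
      have hd := hdense p hp
      have horb : fOrbit (∅ : Set H) p = {p} := by
        ext y
        constructor
        · rintro ⟨l, hl, rfl⟩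
          cases l with
          | nil => rfl
          | cons g l => exact absurd (hl g List.mem_cons_self) (Set.notMem_empty g)
        · rintro rfl
          exact ⟨[], by simp, rfl⟩
      rw [horb] at hd
      have hhalf : ((1/2 : ℝ) : Circle1) ≠ 0 := by
        rw [Ne, AddCircle.coe_eq_zero_iff]
        rintro ⟨n, hn⟩
        have hcast : (n : ℝ) * 1 = 1/2 := by simpa [zsmul_eq_mul] using hn
        rcases le_or_gt n 0 with h0 | h0
        · have : (n:ℝ) ≤ 0 := by exact_mod_cast h0
          linarith
        · have : (1:ℝ) ≤ (n:ℝ) := by exact_mod_cast h0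
          linarith
      set q : Circle1 := p + ((1/2 : ℝ) : Circle1) with hq
      have hqp : q ≠ p := by
        intro hq'
        apply hhalf
        have : p + ((1/2 : ℝ) : Circle1) = p + 0 := by rw [add_zero]; exact hq'
        exact add_left_cancel this
      have : q ∈ closure ({p} : Set Circle1) := hd q
      rw [closure_singleton, mem_singleton_iff] at this
      exact hqp this
    · exact hne
  have hFfin : (G ∪ {h} : Set H).Finite := hfin.union (finite_singleton h)
  have hFne : (G ∪ {h} : Set H).Nonempty := ⟨h, Or.inr rfl⟩
  constructor
  · -- equicontinuity
    intro x ε hε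
    obtain ⟨δ₁, hδ₁, N, hA⟩ := claimA G K hmin hdense h hKh p hp hfix hsymm hGne x (ε/4) (by linarith)
    obtain ⟨δ₂, hδ₂, hfw⟩ := finite_words (G ∪ {h}) hFfin hFne N x (ε/2) (by linarith)
    refine ⟨min δ₁ δ₂, lt_min hδ₁ hδ₂, fun y hy => ?_⟩
    have hy1 : dist x y < δ₁ := lt_of_lt_of_le hy (min_le_left _ _)
    have hy2 : dist x y < δ₂ := lt_of_lt_of_le hy (min_le_right _ _)
    have hbound : ∀ n : ℕ,
        hausdorffDist ((hutch (G ∪ {h}))^[n] {x}) ((hutch (G ∪ {h}))^[n] {y}) ≤ ε/2 := by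
      intro n
      rcases le_or_gt n N with hnN | hnN
      · apply hausdorffDist_le_of_mem_dist (by linarith)
        · intro z hz
          rcases (mem_iterate_hutch (G ∪ {h}) n x z).1 hz with ⟨l, hl, hlen, rfl⟩
          exact ⟨evalL l y, (mem_iterate_hutch (G ∪ {h}) n y _).2 ⟨l, hl, hlen, rfl⟩,
            hfw y hy2 l hl (hlen ▸ hnN)⟩
        · intro z hz
          rcases (mem_iterate_hutch (G ∪ {h}) n y z).1 hz with ⟨l, hl, hlen, rfl⟩
          refine ⟨evalL l x, (mem_iterate_hutch (G ∪ {h}) n x _).2 ⟨l, hl, hlen, rfl⟩, ?_⟩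
          rw [dist_comm]
          exact hfw y hy2 l hl (hlen ▸ hnN)
      · apply hausdorffDist_le_of_mem_dist (by linarith)
        · intro z hz
          rcases hA y hy1 n hnN.le z with ⟨w, hw, hzw⟩
          exact ⟨w, hw, by linarith [hzw]⟩
        · intro z hz
          rcases hA x (by simpa using hδ₁) n hnN.le z with ⟨w, hw, hzw⟩
          exact ⟨w, hw, by linarith [hzw]⟩
    have hsup : dHutch (G ∪ {h}) x y ≤ ε/2 := ciSup_le hbound
    linarith
  · -- attractor
    intro C hC hCne
    obtain ⟨c, hc⟩ := hCne
    rw [Metric.tendsto_atTop]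
    intro ε hε
    obtain ⟨δ₁, hδ₁, N, hA⟩ := claimA G K hmin hdense h hKh p hp hfix hsymm hGne c (ε/4) (by linarith)
    refine ⟨N, fun n hn => ?_⟩
    have hdense' := hA c (by simpa using hδ₁) n hn
    have hle : hausdorffDist ((hutch (G ∪ {h}))^[n] C) univ ≤ ε/2 := by
      apply hausdorffDist_le_of_mem_dist (by linarith)
      · intro z _
        exact ⟨z, mem_univ z, by simp; linarith⟩
      · intro t _
        rcases hdense' t with ⟨z, hz, hdz⟩
        refine ⟨z, iterate_hutch_mono (G ∪ {h}) n (singleton_subset_iff.2 hc) hz, ?_⟩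
        linarith [hdz]
    have h0 : (0:ℝ) ≤ hausdorffDist ((hutch (G ∪ {h}))^[n] C) univ := hausdorffDist_nonneg
    rw [Real.dist_eq, sub_zero, abs_of_nonneg h0]
    linarith
end
end

section
/- Let f₁ = R_α be the rotation of S¹ = ℝ/ℤ by an irrational angle α, and let f₂, f₃, f₄ be the piecewise linear circle homeomorphisms with breakpoints: f₂ through (0,0), (1/4, 1/8), (1/2, 1/2), (1,1); f₃ through (0,0), (5/8, 5/8), (3/4, 7/8), (1,1); f₄ through (0,0), (1/2, 1/2), (5/8, 3/4), (7/8, 7/8), (1,1). Then S¹ is an attractor for the IFS 𝓕 = {f₁, f₂, f₃, f₄}: for every non-empty compact set C ⊆ S¹, d_H(F^n(C), S¹) → 0 as n → ∞, where F is the Hutchinson operator of 𝓕 and d_H the Hausdorff distance. -/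
open Metric Set Filter

noncomputable section

/-- Lift (on the fundamental domain `[0,1]`) of the piecewise linear homeomorphism `f₂`
with breakpoints `(0,0), (1/4, 1/8), (1/2, 1/2), (1,1)`. -/
def pl2 (x : ℝ) : ℝ :=
  if x ≤ 1/4 then x/2 else if x ≤ 1/2 then 3/2 * x - 1/4 else x

/-- Lift (on the fundamental domain `[0,1]`) of the piecewise linear homeomorphism `f₃`
with breakpoints `(0,0), (5/8, 5/8), (3/4, 7/8), (1,1)`. -/
def pl3 (x : ℝ) : ℝ :=
  if x ≤ 5/8 then x else if x ≤ 3/4 then 2 * x - 5/8 else x/2 + 1/2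

/-- Lift (on the fundamental domain `[0,1]`) of the piecewise linear homeomorphism `f₄`
with breakpoints `(0,0), (1/2, 1/2), (5/8, 3/4), (7/8, 7/8), (1,1)`. -/
def pl4 (x : ℝ) : ℝ :=
  if x ≤ 1/2 then x else if x ≤ 5/8 then 2 * x - 1/2
  else if x ≤ 7/8 then x/2 + 7/16 else x

/- ===== Auxiliary lemmas ===== -/

lemma dist_coe_le (a b : ℝ) (j : ℤ) : dist ((a : Circle1)) ((b : Circle1)) ≤ |a - b - j| := by
  rw [dist_eq_norm]
  have h : (a : Circle1) - (b : Circle1) = ((a - b : ℝ) : Circle1) := by norm_cast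
  rw [h, AddCircle.norm_eq]
  simpa using round_le (a - b) j

lemma exists_rep (x : Circle1) : ∃ r : ℝ, r ∈ Ico (0:ℝ) 1 ∧ (r : Circle1) = x := by
  induction x using QuotientAddGroup.induction_on with
  | _ b =>
    refine ⟨toIcoMod one_pos 0 b, by simpa using toIcoMod_mem_Ico' one_pos b, ?_⟩
    rw [QuotientAddGroup.eq_iff_sub_mem, toIcoMod_sub_self]
    apply AddSubgroup.zsmul_mem_zmultiples

lemma coe_irr_ne_zero (α : ℝ) (h : Irrational α) : ((α : ℝ) : Circle1) ≠ 0 := by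
  intro hc
  rcases (AddCircle.coe_eq_zero_iff 1).mp hc with ⟨n, hn⟩
  exact h.ne_int n (by simpa using hn.symm)

lemma iter_lim_up (f : ℝ → ℝ) (hf : Continuous f) (x b : ℝ) (hxb : x ≤ b)
    (hmap : ∀ y, x ≤ y → y ≤ b → y ≤ f y ∧ f y ≤ b)
    (hfix : ∀ y, x ≤ y → y ≤ b → f y = y → y = b) :
    Tendsto (fun n => f^[n] x) atTop (nhds b) ∧ ∀ n, x ≤ f^[n] x ∧ f^[n] x ≤ b := by
  have inv : ∀ n, x ≤ f^[n] x ∧ f^[n] x ≤ b := by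
    intro n; induction n with
    | zero => simp only [Function.iterate_zero_apply]; exact ⟨le_rfl, hxb⟩
    | succ n ih =>
      rw [Function.iterate_succ_apply']
      exact ⟨le_trans ih.1 (hmap _ ih.1 ih.2).1, (hmap _ ih.1 ih.2).2⟩
  have mono : Monotone fun n => f^[n] x := by
    apply monotone_nat_of_le_succ
    intro n
    rw [Function.iterate_succ_apply']
    exact (hmap _ (inv n).1 (inv n).2).1
  have bdd : BddAbove (Set.range fun n => f^[n] x) := by
    refine ⟨b, ?_⟩; rintro _ ⟨n, rfl⟩; exact (inv n).2
  have hconv := tendsto_atTop_ciSup mono bdd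
  set L := ⨆ n, f^[n] x with hL
  have hLb : L ≤ b := ciSup_le fun n => (inv n).2
  have hxL : x ≤ L := by have := le_ciSup bdd 0; simpa using this
  have hfL : f L = L := by
    have h1 : Tendsto (fun n => f (f^[n] x)) atTop (nhds (f L)) := (hf.tendsto L).comp hconv
    have h2 : (fun n => f (f^[n] x)) = fun n => f^[n + 1] x :=
      funext fun n => (Function.iterate_succ_apply' f n x).symm
    have h3 : Tendsto (fun n => f^[n + 1] x) atTop (nhds L) :=
      (tendsto_add_atTop_iff_nat 1).mpr hconv
    exact tendsto_nhds_unique (h2 ▸ h1) h3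
  rw [hfix L hxL hLb hfL] at hconv
  exact ⟨hconv, inv⟩

lemma iter_lim_down (f : ℝ → ℝ) (hf : Continuous f) (x a : ℝ) (hax : a ≤ x)
    (hmap : ∀ y, a ≤ y → y ≤ x → a ≤ f y ∧ f y ≤ y)
    (hfix : ∀ y, a ≤ y → y ≤ x → f y = y → y = a) :
    Tendsto (fun n => f^[n] x) atTop (nhds a) ∧ ∀ n, a ≤ f^[n] x ∧ f^[n] x ≤ x := by
  have inv : ∀ n, a ≤ f^[n] x ∧ f^[n] x ≤ x := by
    intro n; induction n with
    | zero => simp only [Function.iterate_zero_apply]; exact ⟨hax, le_rfl⟩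
    | succ n ih =>
      rw [Function.iterate_succ_apply']
      exact ⟨(hmap _ ih.1 ih.2).1, le_trans (hmap _ ih.1 ih.2).2 ih.2⟩
  have mono : Antitone fun n => f^[n] x := by
    apply antitone_nat_of_succ_le
    intro n
    rw [Function.iterate_succ_apply']
    exact (hmap _ (inv n).1 (inv n).2).2
  have bdd : BddBelow (Set.range fun n => f^[n] x) := by
    refine ⟨a, ?_⟩; rintro _ ⟨n, rfl⟩; exact (inv n).1
  have hconv := tendsto_atTop_ciInf mono bdd
  set L := ⨅ n, f^[n] x with hL
  have hLa : a ≤ L := le_ciInf fun n => (inv n).1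
  have hxL : L ≤ x := by have := ciInf_le bdd 0; simpa using this
  have hfL : f L = L := by
    have h1 : Tendsto (fun n => f (f^[n] x)) atTop (nhds (f L)) := (hf.tendsto L).comp hconv
    have h2 : (fun n => f (f^[n] x)) = fun n => f^[n + 1] x :=
      funext fun n => (Function.iterate_succ_apply' f n x).symm
    have h3 : Tendsto (fun n => f^[n + 1] x) atTop (nhds L) :=
      (tendsto_add_atTop_iff_nat 1).mpr hconv
    exact tendsto_nhds_unique (h2 ▸ h1) h3
  rw [hfix L hLa hxL hfL] at hconv
  exact ⟨hconv, inv⟩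

lemma hutch_mono {G : Set (Circle1 ≃ₜ Circle1)} : Monotone (hutch G) := by
  intro A B h
  exact Set.iUnion₂_mono fun g _ => Set.image_mono h

lemma hutch_iter_mono {G : Set (Circle1 ≃ₜ Circle1)} (n : ℕ) : Monotone ((hutch G)^[n]) := by
  induction n with
  | zero => exact monotone_id
  | succ n ih =>
    rw [Function.iterate_succ]
    exact ih.comp hutch_mono

lemma mem_hutch {G : Set (Circle1 ≃ₜ Circle1)} {g : Circle1 ≃ₜ Circle1} (hg : g ∈ G)
    {A : Set Circle1} {y : Circle1} (hy : y ∈ A) : g y ∈ hutch G A :=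
  Set.mem_biUnion hg ⟨y, hy, rfl⟩

lemma chain_mem {G : Set (Circle1 ≃ₜ Circle1)} {f : Circle1 ≃ₜ Circle1} (hfG : f ∈ G)
    (pl : ℝ → ℝ) (hpl : ∀ x ∈ Icc (0:ℝ) 1, f ((x : ℝ) : Circle1) = ((pl x : ℝ) : Circle1))
    (lo hi : ℝ) (hlo : 0 ≤ lo) (hhi : hi ≤ 1)
    (hinv : ∀ y, lo ≤ y → y ≤ hi → lo ≤ pl y ∧ pl y ≤ hi)
    {r : ℝ} (hr1 : lo ≤ r) (hr2 : r ≤ hi)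
    {x : Circle1} {m : ℕ} (hx : ((r : ℝ) : Circle1) ∈ (hutch G)^[m] {x}) (n : ℕ) :
    (((pl^[n] r : ℝ)) : Circle1) ∈ (hutch G)^[m + n] {x} ∧ lo ≤ pl^[n] r ∧ pl^[n] r ≤ hi := by
  induction n with
  | zero => simpa using ⟨hx, hr1, hr2⟩
  | succ n ih =>
    obtain ⟨hmem, h1, h2⟩ := ih
    have hval : f ((pl^[n] r : ℝ) : Circle1) = ((pl (pl^[n] r) : ℝ) : Circle1) :=
      hpl _ ⟨hlo.trans h1, h2.trans hhi⟩
    have hmem' : f ((pl^[n] r : ℝ) : Circle1) ∈ (hutch G)^[m + (n + 1)] {x} := by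
      have : m + (n + 1) = (m + n) + 1 := by omega
      rw [this, Function.iterate_succ_apply']
      exact mem_hutch hfG hmem
    rw [hval] at hmem'
    rw [Function.iterate_succ_apply']
    exact ⟨hmem', (hinv _ h1 h2).1, (hinv _ h1 h2).2⟩

lemma cont_pl2 : Continuous pl2 := by
  unfold pl2
  apply Continuous.if_le
  · fun_prop
  · apply Continuous.if_le <;> try fun_prop
    intro x hx; norm_num [hx]
  · fun_prop
  · fun_prop
  · intro x hx
    subst hx  -- hx : x = 1/4?
    norm_num

lemma cont_pl3 : Continuous pl3 := by
  unfold pl3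
  apply Continuous.if_le
  · fun_prop
  · apply Continuous.if_le <;> try fun_prop
    intro x hx; norm_num [hx]
  · fun_prop
  · fun_prop
  · intro x hx; subst hx; norm_num

lemma cont_pl4 : Continuous pl4 := by
  unfold pl4
  apply Continuous.if_le
  · fun_prop
  · apply Continuous.if_le
    · fun_prop
    · apply Continuous.if_le <;> try fun_prop
      intro x hx; norm_num [hx]
    · fun_prop
    · fun_prop
    · intro x hx; norm_num [hx]
  · fun_prop
  · fun_prop
  · intro x hx; norm_num [hx]

lemma dioph_aux (α : ℝ) (hα : Irrational α) (δ : ℝ) (hδ : 0 < δ) :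
    ∃ (d : ℕ) (m : ℤ), 1 ≤ d ∧ ((d:ℝ) * α - m ≠ 0) ∧ |(d:ℝ) * α - m| < δ := by
  obtain ⟨N, hN⟩ := exists_nat_gt (1/δ)
  have hN0 : 0 < (N:ℝ) := lt_trans (by positivity) hN
  have hNδ : 1 / (N:ℝ) < δ := by
    rw [div_lt_iff₀ hN0]
    have := (div_lt_iff₀ hδ).mp hN
    nlinarith
  have maps : ∀ k ∈ Finset.range (N+1),
      ⌊(N:ℝ) * Int.fract ((k:ℝ) * α)⌋ ∈ Finset.Ico (0:ℤ) (N:ℤ) := by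
    intro k _
    have h0 : 0 ≤ (N:ℝ) * Int.fract ((k:ℝ)*α) := mul_nonneg hN0.le (Int.fract_nonneg _)
    have h1 : (N:ℝ) * Int.fract ((k:ℝ)*α) < N := by
      have := Int.fract_lt_one ((k:ℝ)*α); nlinarith
    rw [Finset.mem_Ico]
    constructor
    · exact Int.le_floor.mpr (by exact_mod_cast h0)
    · exact Int.floor_lt.mpr (by exact_mod_cast h1)
  have hcard : (Finset.Ico (0:ℤ) (N:ℤ)).card < (Finset.range (N+1)).card := by
    simp [Int.card_Ico]
  obtain ⟨k, hk, l, hl, hkl, heq⟩ :=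
    Finset.exists_ne_map_eq_of_card_lt_of_maps_to hcard maps
  -- close fract values
  have key : ∀ a b : ℝ, ⌊(N:ℝ) * a⌋ = ⌊(N:ℝ) * b⌋ → |a - b| < 1/N := by
    intro a b h
    have h1 := Int.floor_le ((N:ℝ) * a)
    have h2 := Int.lt_floor_add_one ((N:ℝ) * a)
    have h3 := Int.floor_le ((N:ℝ) * b)
    have h4 := Int.lt_floor_add_one ((N:ℝ) * b)
    rw [h] at h1 h2
    have h5 : (b - a) < 1/N := by rw [lt_div_iff₀ hN0]; nlinarith
    have h6 : (a - b) < 1/N := by rw [lt_div_iff₀ hN0]; nlinarith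
    rw [abs_lt]
    constructor <;> linarith
  rcases hkl.lt_or_gt with h | h
  case _ =>
    refine ⟨l - k, ⌊(l:ℝ)*α⌋ - ⌊(k:ℝ)*α⌋, by omega, ?_, ?_⟩
    · intro hc
      have hcast : ((l - k : ℕ) : ℝ) = (l:ℝ) - k := by
        push_cast [Nat.cast_sub h.le]; ring
      apply hα
      refine ⟨((⌊(l:ℝ)*α⌋ - ⌊(k:ℝ)*α⌋ : ℤ) : ℚ) / ((l - k : ℕ) : ℚ), ?_⟩
      have hd : ((l - k : ℕ) : ℝ) ≠ 0 := by
        rw [hcast]; intro hz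
        have : (l:ℝ) = k := by linarith
        exact absurd (by exact_mod_cast this) (by omega)
      push_cast
      rw [div_eq_iff (by exact_mod_cast hd)]
      rw [hcast] at hc ⊢
      push_cast at hc ⊢
      linarith
    · have hc : ((l - k : ℕ) : ℝ) * α - ((⌊(l:ℝ)*α⌋ - ⌊(k:ℝ)*α⌋ : ℤ) : ℝ)
          = Int.fract ((l:ℝ)*α) - Int.fract ((k:ℝ)*α) := by
        rw [Nat.cast_sub h.le]
        unfold Int.fract
        push_cast
        ring
      rw [hc]
      exact lt_trans (key _ _ heq.symm) hNδ
  case _ =>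
    refine ⟨k - l, ⌊(k:ℝ)*α⌋ - ⌊(l:ℝ)*α⌋, by omega, ?_, ?_⟩
    · intro hc
      have hcast : ((k - l : ℕ) : ℝ) = (k:ℝ) - l := by
        push_cast [Nat.cast_sub h.le]; ring
      apply hα
      refine ⟨((⌊(k:ℝ)*α⌋ - ⌊(l:ℝ)*α⌋ : ℤ) : ℚ) / ((k - l : ℕ) : ℚ), ?_⟩
      have hd : ((k - l : ℕ) : ℝ) ≠ 0 := by
        rw [hcast]; intro hz
        have : (k:ℝ) = l := by linarith
        exact absurd (by exact_mod_cast this) (by omega)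
      push_cast
      rw [div_eq_iff (by exact_mod_cast hd)]
      rw [hcast] at hc ⊢
      push_cast at hc ⊢
      linarith
    · have hc : ((k - l : ℕ) : ℝ) * α - ((⌊(k:ℝ)*α⌋ - ⌊(l:ℝ)*α⌋ : ℤ) : ℝ)
          = Int.fract ((k:ℝ)*α) - Int.fract ((l:ℝ)*α) := by
        rw [Nat.cast_sub h.le]
        unfold Int.fract
        push_cast
        ring
      rw [hc]
      exact lt_trans (key _ _ heq) hNδ

lemma dioph (α : ℝ) (hα : Irrational α) (t δ : ℝ) (hδ : 0 < δ) :
    ∃ (k : ℕ) (j : ℤ), |(k:ℝ) * α - t - j| < δ := by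
  obtain ⟨d, m, _, hne, hlt⟩ := dioph_aux α hα δ hδ
  set c := (d:ℝ) * α - m with hcdef
  have hfr0 := Int.fract_nonneg t
  have hfr1 := Int.fract_lt_one t
  have hfloor : (t : ℝ) - ⌊t⌋ = Int.fract t := rfl
  rcases hne.lt_or_gt with hneg | hpos
  · -- c < 0
    have hc' : 0 < -c := by linarith
    set q := ⌊(1 - Int.fract t) / (-c)⌋ with hqdef
    have hq0 : 0 ≤ q := Int.floor_nonneg.mpr (div_nonneg (by linarith) hc'.le)
    have hfl := Int.floor_le ((1 - Int.fract t) / (-c))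
    have hfu := Int.lt_floor_add_one ((1 - Int.fract t) / (-c))
    have hql : (q:ℝ) * (-c) ≤ 1 - Int.fract t := by
      rw [← le_div_iff₀ hc']; exact hfl
    have hqu : 1 - Int.fract t < (q:ℝ) * (-c) + (-c) := by
      have := (div_lt_iff₀ hc').mp hfu
      rw [← hqdef] at this
      nlinarith
    refine ⟨q.toNat * d, q * m - ⌊t⌋ - 1, ?_⟩
    have htn : ((q.toNat : ℕ) : ℝ) = (q:ℝ) := by
      exact_mod_cast congrArg (Int.cast : ℤ → ℝ) (Int.toNat_of_nonneg hq0)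
    have hcast : ((q.toNat * d : ℕ) : ℝ) = (q:ℝ) * d := by
      push_cast [htn]; ring
    have hval : ((q.toNat * d : ℕ) : ℝ) * α - t - ((q * m - ⌊t⌋ - 1 : ℤ) : ℝ)
        = (q:ℝ) * c - Int.fract t + 1 := by
      rw [hcast, hcdef, ← hfloor]
      push_cast
      ring
    rw [hval, abs_lt]
    constructor
    · nlinarith
    · have habs : -c ≤ |c| := neg_le_abs c
      nlinarith
  · -- c > 0
    set q := ⌊Int.fract t / c⌋ with hqdef
    have hq0 : 0 ≤ q := Int.floor_nonneg.mpr (div_nonneg hfr0 hpos.le)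
    have hfl := Int.floor_le (Int.fract t / c)
    have hfu := Int.lt_floor_add_one (Int.fract t / c)
    have hql : (q:ℝ) * c ≤ Int.fract t := by
      rw [← le_div_iff₀ hpos]; exact hfl
    have hqu : Int.fract t < (q:ℝ) * c + c := by
      have := (div_lt_iff₀ hpos).mp hfu
      rw [← hqdef] at this
      nlinarith
    refine ⟨q.toNat * d, q * m - ⌊t⌋, ?_⟩
    have htn : ((q.toNat : ℕ) : ℝ) = (q:ℝ) := by
      exact_mod_cast congrArg (Int.cast : ℤ → ℝ) (Int.toNat_of_nonneg hq0)
    have hcast : ((q.toNat * d : ℕ) : ℝ) = (q:ℝ) * d := by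
      push_cast [htn]; ring
    have hval : ((q.toNat * d : ℕ) : ℝ) * α - t - ((q * m - ⌊t⌋ : ℤ) : ℝ)
        = (q:ℝ) * c - Int.fract t := by
      rw [hcast, hcdef, ← hfloor]
      push_cast
      ring
    rw [hval, abs_lt]
    constructor
    · have habs : c ≤ |c| := le_abs_self c
      nlinarith
    · nlinarith

/-- For `f₁` an irrational rotation and `f₂, f₃, f₄` the piecewise linear circle
homeomorphisms with the given breakpoints, `S¹` is an attractor for
`𝓕 = {f₁, f₂, f₃, f₄}`. -/
theorem stmt7 (α : ℝ) (hα : Irrational α)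
    (f₁ f₂ f₃ f₄ : Circle1 ≃ₜ Circle1)
    (hf₁ : ∀ z : Circle1, f₁ z = z + (α : Circle1))
    (hf₂ : ∀ x ∈ Icc (0:ℝ) 1, f₂ (x : Circle1) = ((pl2 x : ℝ) : Circle1))
    (hf₃ : ∀ x ∈ Icc (0:ℝ) 1, f₃ (x : Circle1) = ((pl3 x : ℝ) : Circle1))
    (hf₄ : ∀ x ∈ Icc (0:ℝ) 1, f₄ (x : Circle1) = ((pl4 x : ℝ) : Circle1)) :
    IsAttractor {f₁, f₂, f₃, f₄} := by
  set G : Set (Circle1 ≃ₜ Circle1) := {f₁, f₂, f₃, f₄} with hG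
  have hm1 : f₁ ∈ G := by simp [hG]
  have hm2 : f₂ ∈ G := by simp [hG]
  have hm3 : f₃ ∈ G := by simp [hG]
  have hm4 : f₄ ∈ G := by simp [hG]
  -- every point of the circle is fixed by f₂ or f₄
  have habs : ∀ A : Set Circle1, A ⊆ hutch G A := by
    intro A z hz
    obtain ⟨r, ⟨hr0, hr1⟩, hrz⟩ := exists_rep z
    rcases le_or_gt r (1/2) with h | h
    · have hfix : f₄ z = z := by
        rw [← hrz, hf₄ r ⟨hr0, by linarith⟩]
        have he : pl4 r = r := by unfold pl4; rw [if_pos h]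
        rw [he]
      exact hfix ▸ mem_hutch hm4 hz
    · have hfix : f₂ z = z := by
        rw [← hrz, hf₂ r ⟨hr0, hr1.le⟩]
        have he : pl2 r = r := by
          unfold pl2; rw [if_neg (by linarith), if_neg (by linarith)]
        rw [he]
      exact hfix ▸ mem_hutch hm2 hz
  have iter_incr : ∀ (A : Set Circle1) {m n : ℕ}, m ≤ n →
      (hutch G)^[m] A ⊆ (hutch G)^[n] A := by
    intro A m n h
    induction n, h using Nat.le_induction with
    | base => exact subset_rfl
    | succ n hmn ih =>
      refine ih.trans ?_
      rw [Function.iterate_succ_apply']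
      exact habs _
  have rot_mem : ∀ (k : ℕ) {x y : Circle1} {m : ℕ}, y ∈ (hutch G)^[m] {x} →
      y + (((k:ℝ) * α : ℝ) : Circle1) ∈ (hutch G)^[m + k] {x} := by
    intro k
    induction k with
    | zero =>
      intro x y m hy
      simpa using hy
    | succ k ih =>
      intro x y m hy
      have h1 := ih hy
      have h2 : f₁ (y + (((k:ℝ) * α : ℝ) : Circle1)) ∈ (hutch G)^[(m + k) + 1] {x} := by
        rw [Function.iterate_succ_apply']
        exact mem_hutch hm1 h1
      have h3 : f₁ (y + (((k:ℝ) * α : ℝ) : Circle1))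
          = y + ((((k + 1 : ℕ):ℝ) * α : ℝ) : Circle1) := by
        rw [hf₁, add_assoc]
        congr 1
        rw [show (((k + 1 : ℕ):ℝ) * α : ℝ) = ((k:ℝ) * α + α : ℝ) by push_cast; ring]
        norm_cast
      rw [h3] at h2
      have he : m + (k + 1) = (m + k) + 1 := by omega
      rw [he]
      exact h2
  -- synchronizing towards 0 from (5/8, 1]
  have piece3 : ∀ r : ℝ, 5/8 < r → r ≤ 1 → ∀ (x : Circle1) (m : ℕ),
      ((r:ℝ) : Circle1) ∈ (hutch G)^[m] {x} → ∀ ε > (0:ℝ),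
      ∃ m' y, y ∈ (hutch G)^[m'] {x} ∧ dist y 0 < ε := by
    intro r hr58 hr1 x m hmem ε hε
    have hinc : ∀ y, r ≤ y → y ≤ 1 → y ≤ pl3 y ∧ pl3 y ≤ 1 := by
      intro y h1 h2
      unfold pl3; split_ifs <;> constructor <;> linarith
    have hfix : ∀ y, r ≤ y → y ≤ 1 → pl3 y = y → y = 1 := by
      intro y h1 h2 h3
      unfold pl3 at h3; split_ifs at h3 <;> linarith
    have hinvc : ∀ y, r ≤ y → y ≤ 1 → r ≤ pl3 y ∧ pl3 y ≤ 1 :=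
      fun y a b => ⟨le_trans a (hinc y a b).1, (hinc y a b).2⟩
    obtain ⟨htend, hinvn⟩ := iter_lim_up pl3 cont_pl3 r 1 hr1 hinc hfix
    obtain ⟨N, hN⟩ := (Metric.tendsto_atTop).mp htend ε hε
    refine ⟨m + N, ((pl3^[N] r : ℝ) : Circle1),
      (chain_mem hm3 pl3 hf₃ r 1 (by linarith) le_rfl hinvc le_rfl hr1 hmem N).1, ?_⟩
    have hb := hN N le_rfl
    rw [Real.dist_eq] at hb
    have h0 : ((0:ℝ) : Circle1) = 0 := by norm_cast
    calc dist (((pl3^[N] r : ℝ)) : Circle1) 0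
        = dist (((pl3^[N] r : ℝ)) : Circle1) (((0:ℝ) : Circle1)) := by rw [h0]
      _ ≤ |pl3^[N] r - 0 - ((1:ℤ):ℝ)| := dist_coe_le _ _ 1
      _ < ε := by
          have : |pl3^[N] r - 0 - ((1:ℤ):ℝ)| = |pl3^[N] r - 1| := by norm_num
          rw [this]; exact hb
  -- from (1/2, 5/8] move into (3/4, 7/8] using f₄
  have piece4 : ∀ r : ℝ, 1/2 < r → r ≤ 5/8 → ∀ (x : Circle1) (m : ℕ),
      ((r:ℝ) : Circle1) ∈ (hutch G)^[m] {x} → ∀ ε > (0:ℝ),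
      ∃ m' y, y ∈ (hutch G)^[m'] {x} ∧ dist y 0 < ε := by
    intro r hr12 hr58 x m hmem ε hε
    have hinc : ∀ y, r ≤ y → y ≤ 7/8 → y ≤ pl4 y ∧ pl4 y ≤ 7/8 := by
      intro y h1 h2
      unfold pl4; split_ifs <;> constructor <;> linarith
    have hfix : ∀ y, r ≤ y → y ≤ 7/8 → pl4 y = y → y = 7/8 := by
      intro y h1 h2 h3
      unfold pl4 at h3; split_ifs at h3 <;> linarith
    have hinvc : ∀ y, r ≤ y → y ≤ 7/8 → r ≤ pl4 y ∧ pl4 y ≤ 7/8 :=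
      fun y a b => ⟨le_trans a (hinc y a b).1, (hinc y a b).2⟩
    obtain ⟨htend, hinvn⟩ := iter_lim_up pl4 cont_pl4 r (7/8) (by linarith) hinc hfix
    obtain ⟨N, hN⟩ := (Metric.tendsto_atTop).mp htend (1/8) (by norm_num)
    have hb := hN N le_rfl
    rw [Real.dist_eq] at hb
    have hmem' := (chain_mem hm4 pl4 hf₄ r (7/8) (by linarith) (by norm_num)
      hinvc le_rfl (hr58.trans (by norm_num)) hmem N).1
    have ha34 : 3/4 < pl4^[N] r := by
      have := abs_lt.mp hb; linarith [this.1]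
    have ha78 : pl4^[N] r ≤ 7/8 := (hinvn N).2
    exact piece3 (pl4^[N] r) (by linarith) (by linarith) x (m + N) hmem' ε hε
  -- from [0, 1/2) towards 0 using f₂
  have piece2 : ∀ r : ℝ, 0 ≤ r → r < 1/2 → ∀ (x : Circle1) (m : ℕ),
      ((r:ℝ) : Circle1) ∈ (hutch G)^[m] {x} → ∀ ε > (0:ℝ),
      ∃ m' y, y ∈ (hutch G)^[m'] {x} ∧ dist y 0 < ε := by
    intro r hr0 hr12 x m hmem ε hε
    have hdec : ∀ y, 0 ≤ y → y ≤ r → 0 ≤ pl2 y ∧ pl2 y ≤ y := by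
      intro y h1 h2
      unfold pl2; split_ifs <;> constructor <;> linarith
    have hfix : ∀ y, 0 ≤ y → y ≤ r → pl2 y = y → y = 0 := by
      intro y h1 h2 h3
      unfold pl2 at h3; split_ifs at h3 <;> linarith
    have hinvc : ∀ y, 0 ≤ y → y ≤ r → 0 ≤ pl2 y ∧ pl2 y ≤ r :=
      fun y a b => ⟨(hdec y a b).1, le_trans (hdec y a b).2 b⟩
    obtain ⟨htend, hinvn⟩ := iter_lim_down pl2 cont_pl2 r 0 hr0 hdec hfix
    obtain ⟨N, hN⟩ := (Metric.tendsto_atTop).mp htend ε hε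
    refine ⟨m + N, ((pl2^[N] r : ℝ) : Circle1),
      (chain_mem hm2 pl2 hf₂ 0 r le_rfl (by linarith) hinvc hr0 le_rfl hmem N).1, ?_⟩
    have hb := hN N le_rfl
    rw [Real.dist_eq] at hb
    have h0 : ((0:ℝ) : Circle1) = 0 := by norm_cast
    calc dist (((pl2^[N] r : ℝ)) : Circle1) 0
        = dist (((pl2^[N] r : ℝ)) : Circle1) (((0:ℝ) : Circle1)) := by rw [h0]
      _ ≤ |pl2^[N] r - 0 - ((0:ℤ):ℝ)| := dist_coe_le _ _ 0
      _ < ε := by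
          have : |pl2^[N] r - 0 - ((0:ℤ):ℝ)| = |pl2^[N] r - 0| := by norm_num
          rw [this]; exact hb
  have pieces : ∀ r : ℝ, 0 ≤ r → r ≤ 1 → r ≠ 1/2 → ∀ (x : Circle1) (m : ℕ),
      ((r:ℝ) : Circle1) ∈ (hutch G)^[m] {x} → ∀ ε > (0:ℝ),
      ∃ m' y, y ∈ (hutch G)^[m'] {x} ∧ dist y 0 < ε := by
    intro r h0 h1 hne x m hmem ε hε
    rcases lt_trichotomy r (1/2) with h | h | h
    · exact piece2 r h0 h x m hmem ε hε
    · exact absurd h hne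
    · rcases le_or_gt r (5/8) with h58 | h58
      · exact piece4 r h h58 x m hmem ε hε
      · exact piece3 r h58 h1 x m hmem ε hε
  have near0 : ∀ (x : Circle1) (ε : ℝ), 0 < ε →
      ∃ m y, y ∈ (hutch G)^[m] {x} ∧ dist y 0 < ε := by
    intro x ε hε
    obtain ⟨r, ⟨hr0, hr1⟩, hrx⟩ := exists_rep x
    have hbase : ((r:ℝ) : Circle1) ∈ (hutch G)^[0] {x} := by simp [hrx]
    by_cases hr : r = 1/2
    · obtain ⟨r', ⟨h0', h1'⟩, hr'x⟩ := exists_rep (f₁ x)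
      have hmem1 : ((r':ℝ) : Circle1) ∈ (hutch G)^[1] {x} := by
        rw [hr'x, show (1:ℕ) = 0 + 1 from rfl, Function.iterate_succ_apply']
        exact mem_hutch hm1 (by simp)
      have hne : r' ≠ 1/2 := by
        intro he
        apply coe_irr_ne_zero α hα
        have e1 : ((r':ℝ) : Circle1) = f₁ x := hr'x
        rw [he, hf₁, ← hrx, hr] at e1
        exact add_eq_left.mp e1.symm
      exact pieces r' h0' h1'.le hne x 1 hmem1 ε hε
    · exact pieces r hr0 hr1.le hr x 0 hbase ε hε
  have orbit : ∀ (x z : Circle1) (ε : ℝ), 0 < ε →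
      ∃ m y, y ∈ (hutch G)^[m] {x} ∧ dist y z < ε := by
    intro x z ε hε
    obtain ⟨m₀, y₀, hy₀, hd₀⟩ := near0 x (ε/2) (by linarith)
    obtain ⟨t, _, htz⟩ := exists_rep z
    obtain ⟨k, j, hkj⟩ := dioph α hα t (ε/2) (by linarith)
    refine ⟨m₀ + k, y₀ + (((k:ℝ) * α : ℝ) : Circle1), rot_mem k hy₀, ?_⟩
    set c := (((k:ℝ) * α : ℝ) : Circle1) with hc
    have step1 : dist (y₀ + c) c = dist y₀ 0 := by
      have := dist_add_right y₀ 0 c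
      simpa using this
    have step2 : dist c z < ε/2 := by
      rw [← htz]
      calc dist c ((t:ℝ) : Circle1) ≤ |(k:ℝ) * α - t - j| := dist_coe_le _ _ j
        _ < ε/2 := hkj
    calc dist (y₀ + c) z ≤ dist (y₀ + c) c + dist c z := dist_triangle _ _ _
      _ < ε := by rw [step1]; linarith
  -- final assembly
  intro C hC hCne
  rw [Metric.tendsto_atTop]
  intro ε hε
  obtain ⟨x₀, hx₀⟩ := hCne
  choose my yy hmem hdist using fun z : Circle1 => orbit x₀ z (ε/4) (by linarith)
  have hcover : (univ : Set Circle1) ⊆ ⋃ z : Circle1, ball (yy z) (ε/4) := by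
    intro w _
    exact mem_iUnion.mpr ⟨w, by rw [mem_ball, dist_comm]; exact hdist w⟩
  obtain ⟨s, hs⟩ := isCompact_univ.elim_finite_subcover
    (fun z : Circle1 => ball (yy z) (ε/4)) (fun z => isOpen_ball) hcover
  refine ⟨s.sup my, ?_⟩
  intro n hn
  have hdense : ∀ w : Circle1, ∃ v ∈ (hutch G)^[n] C, dist w v ≤ ε/2 := by
    intro w
    obtain ⟨z, hzs, hwz⟩ := mem_iUnion₂.mp (hs (mem_univ w))
    refine ⟨yy z, ?_, ?_⟩
    · have h1 : yy z ∈ (hutch G)^[my z] {x₀} := hmem z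
      have h2 : (hutch G)^[my z] {x₀} ⊆ (hutch G)^[n] {x₀} :=
        iter_incr _ (le_trans (Finset.le_sup hzs) hn)
      have h3 : (hutch G)^[n] {x₀} ⊆ (hutch G)^[n] C :=
        hutch_iter_mono n (singleton_subset_iff.mpr hx₀)
      exact h3 (h2 h1)
    · rw [mem_ball] at hwz
      linarith [hwz.le]
  have hHD : hausdorffDist ((hutch G)^[n] C) univ ≤ ε/2 := by
    refine hausdorffDist_le_of_mem_dist (by linarith) ?_ ?_
    · intro a _
      exact ⟨a, mem_univ a, by rw [dist_self]; linarith⟩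
    · intro w _
      obtain ⟨v, hv, hd⟩ := hdense w
      exact ⟨v, hv, hd⟩
  rw [Real.dist_eq, sub_zero, abs_of_nonneg hausdorffDist_nonneg]
  exact lt_of_le_of_lt hHD (by linarith)
end
end

section
/- Let f₁ = R_α be the rotation of S¹ = ℝ/ℤ by an irrational angle α, and let f₂, f₃, f₄ be the piecewise linear circle homeomorphisms with breakpoints: f₂ through (0,0), (1/4, 1/8), (1/2, 1/2), (1,1); f₃ through (0,0), (5/8, 5/8), (3/4, 7/8), (1,1); f₄ through (0,0), (1/2, 1/2), (5/8, 3/4), (7/8, 7/8), (1,1). Then S¹ is an attractor for the inverse IFS 𝓕₋ = {f₁⁻¹, f₂⁻¹, f₃⁻¹, f₄⁻¹}: for every non-empty compact set C ⊆ S¹, d_H(F₋^n(C), S¹) → 0 as n → ∞, where F₋ is the Hutchinson operator of 𝓕₋ and d_H the Hausdorff distance. -/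
open Metric Set Filter

noncomputable section

-- auxiliary lemmas
lemma myNormCoeLe (x : ℝ) : ‖(x : Circle1)‖ ≤ |x| := by
  rw [← Real.norm_eq_abs]
  exact QuotientAddGroup.norm_mk_le_norm

lemma myDistCoeLe (a b : ℝ) : dist (a : Circle1) (b : Circle1) ≤ |a - b| := by
  rw [dist_eq_norm, ← QuotientAddGroup.mk_sub]
  exact myNormCoeLe _

lemma myRep (z : Circle1) : ∃ x : ℝ, x ∈ Set.Ico (0:ℝ) 1 ∧ (x : Circle1) = z := by
  induction z using QuotientAddGroup.induction_on with
  | H r =>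
    refine ⟨Int.fract r, ⟨Int.fract_nonneg r, Int.fract_lt_one r⟩, ?_⟩
    have h : ((r - Int.fract r : ℝ) : Circle1) = 0 := by
      rw [AddCircle.coe_eq_zero_iff]
      exact ⟨⌊r⌋, by rw [Int.fract, zsmul_eq_mul, mul_one]; ring⟩
    have := QuotientAddGroup.mk_sub (AddSubgroup.zmultiples (1:ℝ)) r (Int.fract r)
    rw [this] at h
    have := sub_eq_zero.mp h
    exact this.symm


lemma mySmallStep (β : ℝ) (hβ : Irrational β) (ε : ℝ) (hε : 0 < ε) :
    ∃ n : ℕ, 0 < n ∧ ∃ δ : ℝ, δ ≠ 0 ∧ |δ| < ε ∧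
      (((n : ℝ) * β : ℝ) : Circle1) = ((δ : ℝ) : Circle1) := by
  obtain ⟨N, hN⟩ := exists_nat_gt (1/ε)
  have hNpos : (0:ℝ) < N := lt_trans (one_div_pos.mpr hε) hN
  have hN0 : 0 < N := by exact_mod_cast hNpos
  have hNe : 1 / (N:ℝ) < ε := by
    rw [div_lt_iff₀ hNpos]
    rw [div_lt_iff₀ hε] at hN
    linarith [hN]
  have hmap : ∀ i ∈ Finset.range (N+1),
      (⌊Int.fract ((i:ℝ) * β) * N⌋₊) ∈ Finset.range N := by
    intro i _
    rw [Finset.mem_range, Nat.floor_lt (mul_nonneg (Int.fract_nonneg _) hNpos.le)]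
    calc Int.fract ((i:ℝ) * β) * N < 1 * N :=
          mul_lt_mul_of_pos_right (Int.fract_lt_one _) hNpos
      _ = N := one_mul _
  obtain ⟨i, hi, j, hj, hij, heq⟩ :=
    Finset.exists_ne_map_eq_of_card_lt_of_maps_to
      (by simp [Finset.card_range]) hmap
  have key : ∀ i j : ℕ, i < j →
      ⌊Int.fract ((i:ℝ) * β) * N⌋₊ = ⌊Int.fract ((j:ℝ) * β) * N⌋₊ →
      ∃ n : ℕ, 0 < n ∧ ∃ δ : ℝ, δ ≠ 0 ∧ |δ| < ε ∧
        (((n : ℝ) * β : ℝ) : Circle1) = ((δ : ℝ) : Circle1) := by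
    clear hij heq hi hj i j
    intro i j hlt heq
    set a := Int.fract ((i:ℝ) * β) with ha
    set b := Int.fract ((j:ℝ) * β) with hb
    have ha0 : 0 ≤ a := Int.fract_nonneg _
    have hb0 : 0 ≤ b := Int.fract_nonneg _
    refine ⟨j - i, by omega, b - a, ?_, ?_, ?_⟩
    · -- nonzero
      intro h0
      have hβn : Irrational (((j - i : ℕ) : ℝ) * β) :=
        hβ.natCast_mul (by omega)
      apply hβn.ne_int (⌊(j:ℝ)*β⌋ - ⌊(i:ℝ)*β⌋)
      have hba : b = a := by linarith [sub_eq_zero.mp h0]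
      rw [ha, hb, Int.fract, Int.fract] at hba
      push_cast [Nat.cast_sub hlt.le]
      linarith [hba]
    · -- small
      rw [abs_lt]
      have h1 : (⌊a * N⌋₊ : ℝ) ≤ a * N := Nat.floor_le (mul_nonneg ha0 hNpos.le)
      have h2 : a * N < ⌊a * N⌋₊ + 1 := Nat.lt_floor_add_one _
      have h3 : (⌊b * N⌋₊ : ℝ) ≤ b * N := Nat.floor_le (mul_nonneg hb0 hNpos.le)
      have h4 : b * N < ⌊b * N⌋₊ + 1 := Nat.lt_floor_add_one _
      have heqR : ((⌊a * N⌋₊ : ℝ)) = ⌊b * N⌋₊ := by exact_mod_cast heq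
      have hbn : (b - a) * N < 1 := by nlinarith
      have han : (a - b) * N < 1 := by nlinarith
      have hεN : 1 < ε * N := by rw [div_lt_iff₀ hε] at hN; linarith
      constructor
      · nlinarith
      · nlinarith
    · -- coe equality
      have hint : (((j - i : ℕ) : ℝ) * β - (b - a) : ℝ) =
          ((⌊(j:ℝ)*β⌋ - ⌊(i:ℝ)*β⌋ : ℤ) : ℝ) := by
        rw [ha, hb, Int.fract, Int.fract]
        push_cast [Nat.cast_sub hlt.le]
        ring
      have h0 : ((((j - i : ℕ) : ℝ) * β - (b - a) : ℝ) : Circle1) = 0 := by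
        rw [AddCircle.coe_eq_zero_iff]
        exact ⟨⌊(j:ℝ)*β⌋ - ⌊(i:ℝ)*β⌋, by rw [zsmul_eq_mul, mul_one, hint]⟩
      have := QuotientAddGroup.mk_sub (AddSubgroup.zmultiples (1:ℝ))
        (((j - i : ℕ) : ℝ) * β) (b - a)
      rw [this] at h0
      exact sub_eq_zero.mp h0
  rcases hij.lt_or_gt with hlt | hlt
  · exact key i j hlt heq
  · exact key j i hlt heq.symm

lemma myDense (β : ℝ) (hβ : Irrational β) (ε : ℝ) (hε : 0 < ε) (t : Circle1) :
    ∃ k : ℕ, dist (((k : ℝ) * β : ℝ) : Circle1) t < ε := by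
  obtain ⟨n, hn, δ, hδ0, hδε, hcoe⟩ := mySmallStep β hβ ε hε
  obtain ⟨t0, ⟨ht0, ht1⟩, hrep⟩ := myRep t
  have hmul : ∀ k : ℕ, ((((k*n : ℕ):ℝ) * β : ℝ) : Circle1) = (((k:ℝ) * δ : ℝ) : Circle1) := by
    intro k
    have h1 : (((k*n:ℕ):ℝ) * β) = k • ((n:ℝ)*β) := by push_cast; rw [nsmul_eq_mul]; ring
    have h2 : ((k:ℝ) * δ) = k • δ := (nsmul_eq_mul _ _).symm
    rw [h1, h2, AddCircle.coe_nsmul, AddCircle.coe_nsmul, hcoe]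
  rcases hδ0.lt_or_gt with hneg | hpos
  · -- δ < 0
    have hδ' : 0 < -δ := by linarith
    have hδε' : -δ < ε := by rwa [abs_of_neg hneg] at hδε
    set k := ⌊(1 - t0)/(-δ)⌋₊ with hk
    have hk1 : (k:ℝ) * (-δ) ≤ 1 - t0 := by
      have h := Nat.floor_le (div_nonneg (by linarith : (0:ℝ) ≤ 1 - t0) hδ'.le)
      rw [← hk] at h
      calc (k:ℝ) * (-δ) ≤ ((1 - t0)/(-δ)) * (-δ) := by
            exact mul_le_mul_of_nonneg_right h hδ'.le
        _ = 1 - t0 := by field_simp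
    have hk2 : 1 - t0 < ((k:ℝ)+1) * (-δ) := by
      have h := Nat.lt_floor_add_one ((1 - t0)/(-δ))
      rw [← hk, div_lt_iff₀ hδ'] at h
      linarith [h]
    refine ⟨k*n, ?_⟩
    rw [hmul k, ← hrep]
    have hshift : (((k:ℝ)*δ : ℝ) : Circle1) = (((k:ℝ)*δ + 1 : ℝ) : Circle1) := by
      have h1 : ((1:ℝ) : Circle1) = 0 := AddCircle.coe_period (1:ℝ)
      rw [QuotientAddGroup.mk_add, h1, add_zero]
    rw [hshift]
    calc dist (((k:ℝ)*δ + 1 : ℝ) : Circle1) ((t0 : ℝ) : Circle1)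
        ≤ |((k:ℝ)*δ + 1) - t0| := myDistCoeLe _ _
      _ < ε := by rw [abs_lt]; constructor <;> nlinarith
  · -- δ > 0
    have hδε' : δ < ε := by rwa [abs_of_pos hpos] at hδε
    set k := ⌊t0/δ⌋₊ with hk
    have hk1 : (k:ℝ) * δ ≤ t0 := by
      have h := Nat.floor_le (div_nonneg ht0 hpos.le)
      rw [← hk] at h
      calc (k:ℝ) * δ ≤ (t0/δ) * δ := mul_le_mul_of_nonneg_right h hpos.le
        _ = t0 := by field_simp
    have hk2 : t0 < ((k:ℝ)+1) * δ := by
      have h := Nat.lt_floor_add_one (t0/δ)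
      rw [← hk, div_lt_iff₀ hpos] at h
      linarith [h]
    refine ⟨k*n, ?_⟩
    rw [hmul k, ← hrep]
    calc dist (((k:ℝ)*δ : ℝ) : Circle1) ((t0 : ℝ) : Circle1)
        ≤ |(k:ℝ)*δ - t0| := myDistCoeLe _ _
      _ < ε := by rw [abs_lt]; constructor <;> nlinarith


lemma myMemHutch {G : Set (Circle1 ≃ₜ Circle1)} {g : Circle1 ≃ₜ Circle1}
    {A : Set Circle1} {z : Circle1} (hg : g ∈ G) (hz : z ∈ A) : g z ∈ hutch G A := by
  exact Set.mem_biUnion hg (Set.mem_image_of_mem _ hz)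

lemma myStep {G : Set (Circle1 ≃ₜ Circle1)} {g : Circle1 ≃ₜ Circle1}
    {C : Set Circle1} {z : Circle1} (n : ℕ) (hg : g ∈ G)
    (hz : z ∈ (hutch G)^[n] C) : g z ∈ (hutch G)^[n+1] C := by
  rw [Function.iterate_succ_apply']
  exact myMemHutch hg hz

/-- In the same situation, `S¹` is an attractor for the inverse IFS
`𝓕₋ = {f₁⁻¹, f₂⁻¹, f₃⁻¹, f₄⁻¹}`. -/
theorem stmt8 (α : ℝ) (hα : Irrational α)
    (f₁ f₂ f₃ f₄ : Circle1 ≃ₜ Circle1)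
    (hf₁ : ∀ z : Circle1, f₁ z = z + (α : Circle1))
    (hf₂ : ∀ x ∈ Icc (0:ℝ) 1, f₂ (x : Circle1) = ((pl2 x : ℝ) : Circle1))
    (hf₃ : ∀ x ∈ Icc (0:ℝ) 1, f₃ (x : Circle1) = ((pl3 x : ℝ) : Circle1))
    (hf₄ : ∀ x ∈ Icc (0:ℝ) 1, f₄ (x : Circle1) = ((pl4 x : ℝ) : Circle1)) :
    IsAttractor {f₁.symm, f₂.symm, f₃.symm, f₄.symm} := by
  classical
  haveI : Fact ((0:ℝ) < 1) := ⟨one_pos⟩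
  set G : Set (Circle1 ≃ₜ Circle1) := {f₁.symm, f₂.symm, f₃.symm, f₄.symm} with hG
  intro C hC hCne
  obtain ⟨c, hc⟩ := hCne
  -- every point is fixed by f₂.symm or f₃.symm
  have hfix : ∀ z : Circle1, ∃ g ∈ G, g z = z := by
    intro z
    obtain ⟨x, ⟨hx0, hx1⟩, hxz⟩ := myRep z
    by_cases hx : x ≤ 5/8
    · refine ⟨f₃.symm, by simp [hG], ?_⟩
      have h3 : f₃ z = z := by
        rw [← hxz, hf₃ x ⟨hx0, by linarith⟩]
        congr 1
        simp only [pl3, if_pos hx]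
      exact f₃.injective (by rw [Homeomorph.apply_symm_apply]; exact h3.symm)
    · refine ⟨f₂.symm, by simp [hG], ?_⟩
      push_neg at hx
      have h2 : f₂ z = z := by
        rw [← hxz, hf₂ x ⟨hx0, hx1.le⟩]
        congr 1
        simp only [pl2]
        split_ifs <;> [linarith; linarith; rfl]
      exact f₂.injective (by rw [Homeomorph.apply_symm_apply]; exact h2.symm)
  have hmono : ∀ k n : ℕ, k ≤ n → (hutch G)^[k] C ⊆ (hutch G)^[n] C := by
    intro k n hkn
    induction n with
    | zero => simp_all
    | succ m ih =>
      rcases Nat.lt_or_ge k (m+1) with h | h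
      · intro z hz
        obtain ⟨g, hg, hgz⟩ := hfix z
        have := myStep m hg (ih (by omega) hz)
        rwa [hgz] at this
      · have : k = m+1 := by omega
        subst this
        exact fun z hz => hz
  -- f₁.symm is translation by -α
  have hf₁s : ∀ z : Circle1, f₁.symm z = z + ((-α : ℝ) : Circle1) := by
    intro z
    apply f₁.injective
    rw [Homeomorph.apply_symm_apply, hf₁]
    have hneg : ((-α : ℝ) : Circle1) = -((α : ℝ) : Circle1) := rfl
    rw [hneg]
    abel
  -- orbit points
  set pt : ℕ → Circle1 := fun k => c + (((k:ℝ) * (-α) : ℝ) : Circle1) with hptdef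
  have hpt : ∀ k : ℕ, pt k ∈ (hutch G)^[k] C := by
    intro k
    induction k with
    | zero => simpa [hptdef] using hc
    | succ m ih =>
      have h1 : pt (m+1) = f₁.symm (pt m) := by
        rw [hf₁s, hptdef]
        simp only
        rw [add_assoc]
        congr 1
        rw [← QuotientAddGroup.mk_add]
        congr 1
        push_cast
        ring
      rw [h1]
      exact myStep m (by simp [hG]) ih
  have hdense : ∀ ε : ℝ, 0 < ε → ∀ u : Circle1, ∃ k : ℕ, dist (pt k) u < ε := by
    intro ε hε u
    obtain ⟨k, hk⟩ := myDense (-α) hα.neg ε hε (u - c)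
    refine ⟨k, ?_⟩
    have : dist (pt k) u = dist (((k:ℝ) * (-α) : ℝ) : Circle1) (u - c) := by
      rw [hptdef]
      simp only
      rw [show u = c + (u - c) by abel]
      rw [dist_add_left]
      congr 1
      abel
    rwa [this]
  rw [Metric.tendsto_atTop]
  intro ε hε
  have hcov : (Set.univ : Set Circle1) ⊆ ⋃ k : ℕ, Metric.ball (pt k) (ε/2) := by
    intro u _
    obtain ⟨k, hk⟩ := hdense (ε/2) (by linarith) u
    exact Set.mem_iUnion.2 ⟨k, by rwa [Metric.mem_ball, dist_comm]⟩
  obtain ⟨s, hs⟩ := isCompact_univ.elim_finite_subcover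
    (fun k : ℕ => Metric.ball (pt k) (ε/2)) (fun k => Metric.isOpen_ball) hcov
  refine ⟨s.sup id, fun n hn => ?_⟩
  have hdH : hausdorffDist ((hutch G)^[n] C) (Set.univ : Set Circle1) ≤ ε/2 := by
    apply hausdorffDist_le_of_infDist (by linarith)
    · intro x _
      rw [infDist_zero_of_mem (Set.mem_univ x)]
      linarith
    · intro x _
      obtain ⟨k, hks, hkx⟩ := Set.mem_iUnion₂.1 (hs (Set.mem_univ x))
      have hkn : k ≤ n := le_trans (Finset.le_sup (f := id) hks) hn
      have hptn : pt k ∈ (hutch G)^[n] C := hmono k n hkn (hpt k)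
      calc infDist x ((hutch G)^[n] C) ≤ dist x (pt k) := infDist_le_dist_of_mem hptn
        _ ≤ ε/2 := (Metric.mem_ball.1 hkx).le
  have h0 : 0 ≤ hausdorffDist ((hutch G)^[n] C) (Set.univ : Set Circle1) :=
    hausdorffDist_nonneg
  rw [Real.dist_eq, abs_of_nonneg (by simpa using h0)]
  simp only [sub_zero]
  linarith
end
end

section
/- Let f₁ = R_α be the rotation of S¹ = ℝ/ℤ by an irrational angle α, and let f₂, f₃, f₄ be the piecewise linear circle homeomorphisms with breakpoints: f₂ through (0,0), (1/4, 1/8), (1/2, 1/2), (1,1); f₃ through (0,0), (5/8, 5/8), (3/4, 7/8), (1,1); f₄ through (0,0), (1/2, 1/2), (5/8, 3/4), (7/8, 7/8), (1,1). Then both the Hutchinson operator F of 𝓕 = {f₁, f₂, f₃, f₄} and the Hutchinson operator F₋ of 𝓕₋ = {f₁⁻¹, f₂⁻¹, f₃⁻¹, f₄⁻¹} are equicontinuous: every point of S¹ is an equicontinuous point of F and of F₋. -/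
open Metric Set Filter

noncomputable section

namespace Stmt9Aux

lemma coe_int_zero (n : ℤ) : ((n : ℝ) : Circle1) = 0 := by
  rw [AddCircle.coe_eq_zero_iff]; exact ⟨n, by simp⟩

lemma coe_fract (w : ℝ) : ((Int.fract w : ℝ) : Circle1) = (w : Circle1) := by
  have h : w = Int.fract w + (⌊w⌋ : ℝ) := by rw [Int.fract]; ring
  calc ((Int.fract w : ℝ) : Circle1)
      = ((Int.fract w : ℝ) : Circle1) + ((⌊w⌋ : ℝ) : Circle1) := by
        rw [coe_int_zero, add_zero]
    _ = ((Int.fract w + (⌊w⌋:ℝ) : ℝ) : Circle1) := by rw [AddCircle.coe_add]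
    _ = (w : Circle1) := by rw [← h]

lemma exists_rep (z : Circle1) : ∃ x : ℝ, 0 ≤ x ∧ x < 1 ∧ (x : Circle1) = z := by
  induction z using QuotientAddGroup.induction_on with
  | H w => exact ⟨Int.fract w, Int.fract_nonneg w, Int.fract_lt_one w, coe_fract w⟩

lemma norm_coe_le (x : ℝ) (m : ℤ) : ‖(x : Circle1)‖ ≤ |x - m| := by
  have he : ‖(x : Circle1)‖ = |x - round x| := by rw [AddCircle.norm_eq]; norm_num
  rcases eq_or_ne (round x) m with h | h
  · rw [he, h]
  · have h1 : |x - round x| ≤ 1/2 := abs_sub_round x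
    have h2 : (1:ℝ) ≤ |(round x : ℝ) - m| := by
      rw [← Int.cast_sub, ← Int.cast_abs]
      exact_mod_cast Int.one_le_abs (sub_ne_zero.mpr h)
    have h3 : |(round x : ℝ) - (m:ℝ)| ≤ |(round x:ℝ) - x| + |x - (m:ℝ)| := abs_sub_le _ _ _
    have h4 : |(round x:ℝ) - x| = |x - (round x:ℝ)| := abs_sub_comm _ _
    rw [he]; linarith

lemma dist_coe_le (x y : ℝ) (m : ℤ) : dist (x : Circle1) (y : Circle1) ≤ |x - y - m| := by
  rw [dist_eq_norm, ← AddCircle.coe_sub]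
  exact norm_coe_le _ m

lemma dist_coe_eq (x y : ℝ) :
    dist (x : Circle1) (y : Circle1) = |x - y - round (x - y)| := by
  rw [dist_eq_norm, ← AddCircle.coe_sub, AddCircle.norm_eq]; norm_num

lemma floorExt (q : ℝ → ℝ) (h0 : q 0 = 0)
    (hm : ∀ s t : ℝ, 0 ≤ s → s ≤ t → t < 1 → q s ≤ q t)
    (hb : ∀ t : ℝ, 0 ≤ t → t < 1 → q t ≤ 1) :
    ∀ u v : ℝ, u ≤ v →
      (⌊u⌋ : ℝ) + q (Int.fract u) ≤ (⌊v⌋ : ℝ) + q (Int.fract v) := by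
  intro u v huv
  rcases lt_or_eq_of_le (Int.floor_mono huv) with h | h
  · have hq1 : q (Int.fract u) ≤ 1 := hb _ (Int.fract_nonneg u) (Int.fract_lt_one u)
    have hq0 : 0 ≤ q (Int.fract v) :=
      h0 ▸ hm 0 _ le_rfl (Int.fract_nonneg v) (Int.fract_lt_one v)
    have hc : (⌊u⌋ : ℝ) + 1 ≤ (⌊v⌋ : ℝ) := by exact_mod_cast Int.lt_iff_add_one_le.mp h
    linarith
  · have hfr : Int.fract u ≤ Int.fract v := by
      rw [Int.fract, Int.fract, h]; linarith
    have := hm _ _ (Int.fract_nonneg u) hfr (Int.fract_lt_one v)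
    rw [h]; linarith

lemma twoLip (pl : ℝ → ℝ) (f : Circle1 ≃ₜ Circle1)
    (hf : ∀ x ∈ Icc (0:ℝ) 1, f (x : Circle1) = ((pl x : ℝ) : Circle1))
    (h0 : pl 0 = 0)
    (hm : ∀ s t : ℝ, 0 ≤ s → s ≤ t → t < 1 →
      2*s - pl s ≤ 2*t - pl t ∧ 2*pl s - s ≤ 2*pl t - t)
    (hb : ∀ t : ℝ, 0 ≤ t → t < 1 → 2*t - pl t ≤ 1 ∧ 2*pl t - t ≤ 1) :
    LipschitzWith 2 f ∧ LipschitzWith 2 f.symm := by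
  set P : ℝ → ℝ := fun x => (⌊x⌋ : ℝ) + pl (Int.fract x) with hP
  have hPf : ∀ w : ℝ, f (w : Circle1) = ((P w : ℝ) : Circle1) := by
    intro w
    have h1 : (w : Circle1) = ((Int.fract w : ℝ) : Circle1) := (coe_fract w).symm
    have h2 := hf (Int.fract w) ⟨Int.fract_nonneg w, (Int.fract_lt_one w).le⟩
    rw [h1, h2, hP]
    simp only
    rw [AddCircle.coe_add, coe_int_zero, zero_add]
  have m1 := floorExt (fun s => 2*s - pl s) (by simp [h0])
    (fun s t hs hst ht => (hm s t hs hst ht).1) (fun t h1 h2 => (hb t h1 h2).1)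
  have m2 := floorExt (fun s => 2*pl s - s) (by simp [h0])
    (fun s t hs hst ht => (hm s t hs hst ht).2) (fun t h1 h2 => (hb t h1 h2).2)
  have e1 : ∀ x : ℝ, (⌊x⌋:ℝ) + (2*(Int.fract x) - pl (Int.fract x)) = 2*x - P x := by
    intro x; rw [hP]; simp only [Int.fract]; ring
  have e2 : ∀ x : ℝ, (⌊x⌋:ℝ) + (2*pl (Int.fract x) - Int.fract x) = 2*(P x) - x := by
    intro x; rw [hP]; simp only [Int.fract]; ring
  have key : ∀ u v : ℝ, u ≤ v → P v - P u ≤ 2*(v-u) ∧ v - u ≤ 2*(P v - P u) := by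
    intro u v huv
    have a1 := m1 u v huv
    have a2 := m2 u v huv
    constructor <;> [linarith [e1 u, e1 v]; linarith [e2 u, e2 v]]
  have keyAbs : ∀ u v : ℝ, |P u - P v| ≤ 2*|u - v| ∧ |u - v| ≤ 2*|P u - P v| := by
    intro u v
    rcases le_total u v with h | h
    · obtain ⟨c1, c2⟩ := key u v h
      have hP' : P u ≤ P v := by linarith
      rw [abs_sub_comm (P u), abs_sub_comm u, abs_of_nonneg (by linarith : (0:ℝ) ≤ P v - P u),
        abs_of_nonneg (by linarith : (0:ℝ) ≤ v - u)]
      exact ⟨c1, c2⟩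
    · obtain ⟨c1, c2⟩ := key v u h
      rw [abs_of_nonneg (by linarith : (0:ℝ) ≤ P u - P v),
        abs_of_nonneg (by linarith : (0:ℝ) ≤ u - v)]
      exact ⟨c1, c2⟩
  have hPint : ∀ (w : ℝ) (n : ℤ), P (w - n) = P w - n := by
    intro w n; rw [hP]; simp only [Int.fract_sub_intCast, Int.floor_sub_intCast]; push_cast; ring
  -- the two distance estimates
  have upper : ∀ a b : Circle1, dist (f a) (f b) ≤ 2 * dist a b := by
    intro a b
    obtain ⟨u, -, -, rfl⟩ := exists_rep a
    obtain ⟨v, -, -, rfl⟩ := exists_rep b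
    set m : ℤ := round (u - v) with hm'
    have hda : dist (u : Circle1) (v : Circle1) = |(u - m) - v| := by
      rw [dist_coe_eq]; congr 1; ring
    have hua : ((u - m : ℝ) : Circle1) = (u : Circle1) := by
      rw [AddCircle.coe_sub, coe_int_zero, sub_zero]
    have hfa : f (u : Circle1) = ((P (u - m) : ℝ) : Circle1) := by rw [← hua, hPf]
    rw [hfa, hPf v]
    calc dist ((P (u - m) : ℝ) : Circle1) ((P v : ℝ) : Circle1)
        ≤ |P (u - m) - P v - ((0:ℤ):ℝ)| := dist_coe_le _ _ 0
      _ = |P (u - m) - P v| := by norm_num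
      _ ≤ 2 * |(u - m) - v| := (keyAbs _ _).1
      _ = 2 * dist (u : Circle1) (v : Circle1) := by rw [hda]
  have lower : ∀ a b : Circle1, dist a b ≤ 2 * dist (f a) (f b) := by
    intro a b
    obtain ⟨u, -, -, rfl⟩ := exists_rep a
    obtain ⟨v, -, -, rfl⟩ := exists_rep b
    rw [hPf, hPf]
    set m : ℤ := round (P u - P v) with hm'
    have hd : dist ((P u : ℝ) : Circle1) ((P v : ℝ) : Circle1) = |P (u - m) - P v| := by
      rw [dist_coe_eq, hPint]; congr 1; ring
    have h1 : dist (u : Circle1) (v : Circle1) ≤ |(u - m) - v| := by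
      have := dist_coe_le u v m
      rwa [show u - v - (m:ℝ) = u - (m:ℝ) - v by ring] at this
    calc dist (u : Circle1) (v : Circle1) ≤ |(u - m) - v| := h1
      _ ≤ 2 * |P (u - m) - P v| := (keyAbs _ _).2
      _ = 2 * dist ((P u : ℝ) : Circle1) ((P v : ℝ) : Circle1) := by rw [hd]
  constructor
  · exact LipschitzWith.of_dist_le_mul fun a b => by simpa using upper a b
  · refine LipschitzWith.of_dist_le_mul fun a b => ?_
    have := lower (f.symm a) (f.symm b)
    rw [Homeomorph.apply_symm_apply, Homeomorph.apply_symm_apply] at this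
    simpa using this


lemma mem_hutch {G : Set (Circle1 ≃ₜ Circle1)} {A : Set Circle1} {p : Circle1} :
    p ∈ hutch G A ↔ ∃ g ∈ G, ∃ a ∈ A, g a = p := by
  simp only [hutch, Set.mem_iUnion, Set.mem_image, exists_prop]

lemma growth {G : Set (Circle1 ≃ₜ Circle1)} (hlip : ∀ g ∈ G, LipschitzWith 2 (g : Circle1 → Circle1)) :
    ∀ (n : ℕ) (x y : Circle1), ∀ p ∈ (hutch G)^[n] {x},
      ∃ q ∈ (hutch G)^[n] {y}, dist p q ≤ 2^n * dist x y := by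
  intro n
  induction n with
  | zero =>
    intro x y p hp
    simp only [Function.iterate_zero, id_eq, Set.mem_singleton_iff] at hp
    subst hp
    exact ⟨y, rfl, by norm_num⟩
  | succ n ih =>
    intro x y p hp
    rw [Function.iterate_succ_apply'] at hp
    obtain ⟨g, hg, p', hp', rfl⟩ := mem_hutch.mp hp
    obtain ⟨q', hq', hdq⟩ := ih x y p' hp'
    refine ⟨g q', ?_, ?_⟩
    · rw [Function.iterate_succ_apply']
      exact mem_hutch.mpr ⟨g, hg, q', hq', rfl⟩
    · calc dist (g p') (g q') ≤ 2 * dist p' q' := by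
            simpa using (hlip g hg).dist_le_mul p' q'
        _ ≤ 2 * (2^n * dist x y) := by linarith
        _ = 2^(n+1) * dist x y := by ring

lemma orbit {G : Set (Circle1 ≃ₜ Circle1)} {a : Circle1}
    (hrot : ∃ f ∈ G, ∀ z : Circle1, f z = z + a)
    (hfix : ∀ z : Circle1, ∃ g ∈ G, g z = z) :
    ∀ (n k : ℕ), k ≤ n → ∀ x : Circle1, x + k • a ∈ (hutch G)^[n] {x} := by
  intro n
  induction n with
  | zero =>
    intro k hk x
    interval_cases k
    simp
  | succ n ih =>
    intro k hk x
    rw [Function.iterate_succ_apply']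
    rcases Nat.lt_or_ge k (n+1) with h | h
    · have hk' : k ≤ n := Nat.lt_succ_iff.mp h
      obtain ⟨g, hg, hgz⟩ := hfix (x + k • a)
      exact mem_hutch.mpr ⟨g, hg, x + k • a, ih k hk' x, hgz⟩
    · have hk' : k = n + 1 := le_antisymm hk h
      subst hk'
      obtain ⟨f, hf, hfz⟩ := hrot
      refine mem_hutch.mpr ⟨f, hf, x + n • a, ih n le_rfl x, ?_⟩
      rw [hfz, succ_nsmul, add_assoc]

lemma mainEqc (G : Set (Circle1 ≃ₜ Circle1)) (a : Circle1)
    (hrot : ∃ f ∈ G, ∀ z : Circle1, f z = z + a)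
    (hlip : ∀ g ∈ G, LipschitzWith 2 (g : Circle1 → Circle1))
    (hfix : ∀ z : Circle1, ∃ g ∈ G, g z = z)
    (hdense : ∀ ε > 0, ∃ N : ℕ, ∀ z : Circle1, ∃ k ≤ N, dist z (k • a) ≤ ε) :
    EquicontinuousHutch G := by
  intro x ε hε
  obtain ⟨N, hN⟩ := hdense (ε/3) (by linarith)
  refine ⟨ε/3 / 2^N, by positivity, fun y hy => ?_⟩
  have hxy : dist x y ≤ ε/3 / 2^N := hy.le
  have hsup : ∀ n : ℕ, hausdorffDist ((hutch G)^[n] {x}) ((hutch G)^[n] {y}) ≤ ε/3 := by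
    intro n
    rcases le_or_gt n N with hn | hn
    · -- small n: Lipschitz growth bound
      have hbound : (2:ℝ)^n * dist x y ≤ ε/3 := by
        have h1 : (2:ℝ)^n ≤ 2^N := by
          apply pow_le_pow_right₀ (by norm_num) hn
        have h2 : (0:ℝ) ≤ dist x y := dist_nonneg
        calc (2:ℝ)^n * dist x y ≤ 2^N * (ε/3 / 2^N) := by
              apply mul_le_mul h1 hxy h2 (by positivity)
          _ = ε/3 := by rw [mul_comm, div_mul_cancel₀ _ (by positivity : (2:ℝ)^N ≠ 0)]
      apply hausdorffDist_le_of_mem_dist (by linarith)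
      · intro p hp
        obtain ⟨q, hq, hdq⟩ := growth hlip n x y p hp
        exact ⟨q, hq, le_trans hdq hbound⟩
      · intro p hp
        obtain ⟨q, hq, hdq⟩ := growth hlip n y x p hp
        exact ⟨q, hq, le_trans hdq (by rwa [dist_comm x y] at hbound)⟩
    · -- large n: both sets are ε/3-dense
      apply hausdorffDist_le_of_mem_dist (by linarith)
      · intro p _
        obtain ⟨k, hk, hdk⟩ := hN (p - y)
        refine ⟨y + k • a, orbit hrot hfix n k (by omega) y, ?_⟩
        rw [show dist p (y + k • a) = dist (p - y) (k • a) by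
          rw [dist_eq_norm, dist_eq_norm]; congr 1; abel]
        exact hdk
      · intro p _
        obtain ⟨k, hk, hdk⟩ := hN (p - x)
        refine ⟨x + k • a, orbit hrot hfix n k (by omega) x, ?_⟩
        rw [show dist p (x + k • a) = dist (p - x) (k • a) by
          rw [dist_eq_norm, dist_eq_norm]; congr 1; abel]
        exact hdk
  calc dHutch G x y ≤ ε/3 := ciSup_le hsup
    _ < ε := by linarith


/-- ceiling step helper -/
lemma step_lemma {c s : ℝ} (hc : 0 < c) (hs0 : 0 ≤ s) (hs1 : s ≤ 1) :
    ∃ j : ℕ, j ≤ ⌈1/c⌉₊ ∧ s ≤ j * c ∧ (j:ℝ) * c ≤ s + c := by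
  refine ⟨⌈s/c⌉₊, ?_, ?_, ?_⟩
  · exact Nat.ceil_le_ceil (by gcongr)
  · rw [← div_le_iff₀ hc] at *
    · exact Nat.le_ceil _
  · have h := Nat.ceil_lt_add_one (by positivity : (0:ℝ) ≤ s/c)
    have : (⌈s/c⌉₊ : ℝ) * c < (s/c + 1) * c := by
      apply mul_lt_mul_of_pos_right h hc
    rw [add_mul, div_mul_cancel₀ _ hc.ne'] at this
    linarith

lemma denseOrb (a : Circle1) (ha : ∀ d : ℕ, 0 < d → d • a ≠ 0) :
    ∀ ε > 0, ∃ N : ℕ, ∀ z : Circle1, ∃ k ≤ N, dist z (k • a) ≤ ε := by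
  intro ε hε
  -- find d ≥ 1 with ‖d • a‖ small
  obtain ⟨x, -, φ, hφ, hconv⟩ :=
    isCompact_univ.tendsto_subseq (x := fun k : ℕ => k • a) (fun n => Set.mem_univ _)
  rw [Metric.tendsto_atTop] at hconv
  obtain ⟨K, hK⟩ := hconv (ε/2) (by linarith)
  set k₁ := φ K
  set k₂ := φ (K+1)
  have hk12 : k₁ < k₂ := hφ (Nat.lt_succ_self K)
  set d := k₂ - k₁ with hd
  have hdpos : 0 < d := Nat.sub_pos_of_lt hk12
  have hdist : dist (k₂ • a) (k₁ • a) < ε := by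
    calc dist (k₂ • a) (k₁ • a) ≤ dist (k₂ • a) x + dist (k₁ • a) x := dist_triangle_right _ _ _
      _ < ε/2 + ε/2 := by
          have h1 := hK (K+1) (Nat.le_succ K)
          have h2 := hK K le_rfl
          simp only [Function.comp_apply] at h1 h2
          exact add_lt_add h1 h2
      _ = ε := by ring
  have hnorm : ‖d • a‖ < ε := by
    have hdk : d + k₁ = k₂ := Nat.sub_add_cancel hk12.le
    have : k₂ • a - k₁ • a = d • a := by
      rw [← hdk, add_nsmul, add_sub_cancel_right]
    rw [← this, ← dist_eq_norm]
    exact hdist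
  -- representative of d • a
  obtain ⟨b, hb0, hb1, hba⟩ := exists_rep (d • a)
  have hbne : b ≠ 0 := by
    intro h
    apply ha d hdpos
    rw [← hba, h]
    norm_num
  have hb0' : 0 < b := lt_of_le_of_ne hb0 (Ne.symm hbne)
  have hnb : ‖d • a‖ = min b (1 - b) := by
    rw [← hba, AddCircle.norm_eq]
    norm_num
    rw [abs_sub_round_eq_min, Int.fract_eq_self.mpr ⟨hb0, hb1⟩]
  -- key smul computation : (d*j) • a = ((j*b : ℝ) : Circle1)
  have hsmul : ∀ j : ℕ, (d * j) • a = (((j:ℝ) * b : ℝ) : Circle1) := by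
    intro j
    rw [mul_nsmul, ← hba, ← AddCircle.coe_nsmul]
    congr 1
    rw [nsmul_eq_mul]
  rcases le_total b (1 - b) with hcase | hcase
  · -- b ≤ ε
    have hbe : b ≤ ε := by rw [hnb, min_eq_left hcase] at hnorm; linarith
    refine ⟨d * ⌈1/b⌉₊, fun z => ?_⟩
    obtain ⟨t, ht0, ht1, htz⟩ := exists_rep z
    obtain ⟨j, hj, hj1, hj2⟩ := step_lemma hb0' ht0 ht1.le
    refine ⟨d * j, Nat.mul_le_mul_left d hj, ?_⟩
    rw [hsmul j, ← htz]
    calc dist ((t:ℝ) : Circle1) (((j:ℝ)*b : ℝ) : Circle1) ≤ |t - (j:ℝ)*b - ((0:ℤ):ℝ)| :=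
          dist_coe_le _ _ 0
      _ ≤ b := by rw [Int.cast_zero, sub_zero, abs_le]; constructor <;> linarith
      _ ≤ ε := hbe
  · -- 1 - b ≤ ε
    set c := 1 - b with hc
    have hc0 : 0 < c := by rw [hc]; linarith
    have hce : c ≤ ε := by rw [hnb, min_eq_right hcase] at hnorm; linarith
    refine ⟨d * ⌈1/c⌉₊, fun z => ?_⟩
    obtain ⟨t, ht0, ht1, htz⟩ := exists_rep z
    obtain ⟨j, hj, hj1, hj2⟩ := step_lemma hc0 (by linarith : (0:ℝ) ≤ 1 - t) (by linarith)
    refine ⟨d * j, Nat.mul_le_mul_left d hj, ?_⟩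
    rw [hsmul j, ← htz]
    calc dist ((t:ℝ) : Circle1) (((j:ℝ)*b : ℝ) : Circle1)
          ≤ |t - (j:ℝ)*b - (((1:ℤ) - j : ℤ):ℝ)| := dist_coe_le _ _ _
      _ ≤ c := by
          push_cast
          rw [abs_le]
          have hjb : (j:ℝ)*b = (j:ℝ) - (j:ℝ)*c := by rw [hc]; ring
          constructor <;> (rw [hjb]; try linarith) <;> linarith
      _ ≤ ε := hce


end Stmt9Aux

lemma pl2_m : ∀ s t : ℝ, 0 ≤ s → s ≤ t → t < 1 →
    2*s - pl2 s ≤ 2*t - pl2 t ∧ 2*pl2 s - s ≤ 2*pl2 t - t := by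
  intro s t hs hst ht; unfold pl2; split_ifs <;> constructor <;> linarith
lemma pl2_b : ∀ t : ℝ, 0 ≤ t → t < 1 → 2*t - pl2 t ≤ 1 ∧ 2*pl2 t - t ≤ 1 := by
  intro t h0 h1; unfold pl2; split_ifs <;> constructor <;> linarith
lemma pl3_m : ∀ s t : ℝ, 0 ≤ s → s ≤ t → t < 1 →
    2*s - pl3 s ≤ 2*t - pl3 t ∧ 2*pl3 s - s ≤ 2*pl3 t - t := by
  intro s t hs hst ht; unfold pl3; split_ifs <;> constructor <;> linarith
lemma pl3_b : ∀ t : ℝ, 0 ≤ t → t < 1 → 2*t - pl3 t ≤ 1 ∧ 2*pl3 t - t ≤ 1 := by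
  intro t h0 h1; unfold pl3; split_ifs <;> constructor <;> linarith
lemma pl4_m : ∀ s t : ℝ, 0 ≤ s → s ≤ t → t < 1 →
    2*s - pl4 s ≤ 2*t - pl4 t ∧ 2*pl4 s - s ≤ 2*pl4 t - t := by
  intro s t hs hst ht; unfold pl4; split_ifs <;> constructor <;> linarith
lemma pl4_b : ∀ t : ℝ, 0 ≤ t → t < 1 → 2*t - pl4 t ≤ 1 ∧ 2*pl4 t - t ≤ 1 := by
  intro t h0 h1; unfold pl4; split_ifs <;> constructor <;> linarith
lemma pl2_zero : pl2 0 = 0 := by norm_num [pl2]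
lemma pl3_zero : pl3 0 = 0 := by norm_num [pl3]
lemma pl4_zero : pl4 0 = 0 := by norm_num [pl4]
lemma pl2_fix {t : ℝ} (h : 5/8 < t) : pl2 t = t := by
  unfold pl2; rw [if_neg (by linarith), if_neg (by linarith)]
lemma pl3_fix {t : ℝ} (h : t ≤ 5/8) : pl3 t = t := by
  unfold pl3; rw [if_pos h]

lemma irr_nsmul_ne (β : ℝ) (hβ : Irrational β) (d : ℕ) (hd : 0 < d) :
    d • ((β : ℝ) : Circle1) ≠ 0 := by
  intro h
  rw [← AddCircle.coe_nsmul, nsmul_eq_mul, AddCircle.coe_eq_zero_iff] at h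
  obtain ⟨n, hn⟩ := h
  simp only [zsmul_eq_mul, mul_one] at hn
  have hd' : (d:ℝ) ≠ 0 := Nat.cast_ne_zero.mpr hd.ne'
  have : β = ((n:ℚ)/(d:ℚ) : ℚ) := by
    push_cast
    field_simp
    linarith [hn]
  exact hβ ⟨_, this.symm⟩


/-- In the same situation, the Hutchinson operators of both
`𝓕 = {f₁, f₂, f₃, f₄}` and `𝓕₋ = {f₁⁻¹, f₂⁻¹, f₃⁻¹, f₄⁻¹}` are equicontinuous. -/
theorem stmt9 (α : ℝ) (hα : Irrational α)
    (f₁ f₂ f₃ f₄ : Circle1 ≃ₜ Circle1)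
    (hf₁ : ∀ z : Circle1, f₁ z = z + (α : Circle1))
    (hf₂ : ∀ x ∈ Icc (0:ℝ) 1, f₂ (x : Circle1) = ((pl2 x : ℝ) : Circle1))
    (hf₃ : ∀ x ∈ Icc (0:ℝ) 1, f₃ (x : Circle1) = ((pl3 x : ℝ) : Circle1))
    (hf₄ : ∀ x ∈ Icc (0:ℝ) 1, f₄ (x : Circle1) = ((pl4 x : ℝ) : Circle1)) :
    EquicontinuousHutch {f₁, f₂, f₃, f₄} ∧
      EquicontinuousHutch {f₁.symm, f₂.symm, f₃.symm, f₄.symm} := by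
  have l2 := Stmt9Aux.twoLip pl2 f₂ hf₂ pl2_zero pl2_m pl2_b
  have l3 := Stmt9Aux.twoLip pl3 f₃ hf₃ pl3_zero pl3_m pl3_b
  have l4 := Stmt9Aux.twoLip pl4 f₄ hf₄ pl4_zero pl4_m pl4_b
  have fixlem : ∀ z : Circle1, f₂ z = z ∨ f₃ z = z := by
    intro z
    obtain ⟨t, ht0, ht1, rfl⟩ := Stmt9Aux.exists_rep z
    rcases le_or_gt t (5/8) with h | h
    · right; rw [hf₃ t ⟨ht0, ht1.le⟩, pl3_fix h]
    · left; rw [hf₂ t ⟨ht0, ht1.le⟩, pl2_fix h]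
  have rotLip : ∀ (g : Circle1 ≃ₜ Circle1) (c : Circle1), (∀ z, g z = z + c) →
      LipschitzWith 2 (g : Circle1 → Circle1) := by
    intro g c hg
    refine LipschitzWith.of_dist_le_mul fun a b => ?_
    rw [hg a, hg b, dist_add_right]
    have h0 : (0:ℝ) ≤ dist a b := dist_nonneg
    simp only [NNReal.coe_ofNat]
    linarith
  constructor
  · refine Stmt9Aux.mainEqc _ ((α : ℝ) : Circle1) ⟨f₁, by simp, hf₁⟩ ?_ ?_ ?_
    · intro g hg
      simp only [Set.mem_insert_iff, Set.mem_singleton_iff] at hg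
      rcases hg with rfl | rfl | rfl | rfl
      · exact rotLip g _ hf₁
      · exact l2.1
      · exact l3.1
      · exact l4.1
    · intro z
      rcases fixlem z with h | h
      · exact ⟨f₂, by simp, h⟩
      · exact ⟨f₃, by simp, h⟩
    · exact Stmt9Aux.denseOrb _ (fun d hd => irr_nsmul_ne α hα d hd)
  · have hf₁s : ∀ z : Circle1, f₁.symm z = z + ((-α : ℝ) : Circle1) := by
      intro z
      have h : f₁ (z + ((-α : ℝ) : Circle1)) = z := by
        rw [hf₁, add_assoc, ← AddCircle.coe_add]
        simp
      conv_lhs => rw [← h]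
      exact f₁.symm_apply_apply _
    refine Stmt9Aux.mainEqc _ (((-α : ℝ)) : Circle1) ⟨f₁.symm, by simp, hf₁s⟩ ?_ ?_ ?_
    · intro g hg
      simp only [Set.mem_insert_iff, Set.mem_singleton_iff] at hg
      rcases hg with rfl | rfl | rfl | rfl
      · exact rotLip _ _ hf₁s
      · exact l2.2
      · exact l3.2
      · exact l4.2
    · intro z
      rcases fixlem z with h | h
      · refine ⟨f₂.symm, by simp, ?_⟩
        conv_lhs => rw [← h]
        exact f₂.symm_apply_apply z
      · refine ⟨f₃.symm, by simp, ?_⟩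
        conv_lhs => rw [← h]
        exact f₃.symm_apply_apply z
    · exact Stmt9Aux.denseOrb _ (fun d hd => irr_nsmul_ne (-α) hα.neg d hd)
end
end
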